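/- arXiv:1311.5713 — 4 statements merged into one kernel-verified Lean document; each statement's English description precedes it below -/
import Mathlib

section
/- Let T be a set of even size t ≥ 1, let ℬ ⊆ T^(t/2), and let α ∈ [4/t, 1]. Then there exists ℰ ⊆ ℬ with |ℰ| > |ℬ| − α·C(t, t/2) such that every E ∈ ℰ has at least α·t²/32 neighbours in ℰ. -/
set_option maxHeartbeats 1000000

open Finset

private lemma symmDiff_card_two {α : Type*} [DecidableEq α] {A B : Finset α} {k : ℕ}
    (hA : A.card = k) (hB : B.card = k) (hI : (A ∩ B).card = k - 1) (hk : 1 ≤ k) :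
    (symmDiff A B).card = 2 := by
  have h1 : (A \ B).card = 1 := by
    have := Finset.card_inter_add_card_sdiff A B
    omega
  have h2 : (B \ A).card = 1 := by
    have := Finset.card_inter_add_card_sdiff B A
    rw [Finset.inter_comm] at this
    omega
  have hd : symmDiff A B = (A \ B) ∪ (B \ A) := by
    rw [symmDiff_def, Finset.sup_eq_union]
  rw [hd, Finset.card_union_of_disjoint disjoint_sdiff_sdiff, h1, h2]

private lemma inter_card_lt {α : Type*} [DecidableEq α] {A B : Finset α} {k : ℕ}
    (hA : A.card = k) (hB : B.card = k) (hne : A ≠ B) : (A ∩ B).card < k := by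
  rcases lt_or_ge ((A ∩ B).card) k with h | h
  · exact h
  · exfalso
    have h1 : A ∩ B = A :=
      Finset.eq_of_subset_of_card_le
        (Finset.inter_subset_left : A ∩ B ⊆ A) (by omega)
    have h2 : A ⊆ B := by rw [← h1]; exact Finset.inter_subset_right
    exact hne (Finset.eq_of_subset_of_card_le h2 (by omega))

private lemma edge_lb {α : Type*} [DecidableEq α] (T : Finset α) (k : ℕ) (hk : 1 ≤ k)
    (S : Finset (Finset α)) (hS : S ⊆ T.powersetCard k) :
    (S.card * k) ^ 2 ≤ T.card.choose (k - 1) *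
      ((∑ A ∈ S, (S.filter fun B => (symmDiff A B).card = 2).card) + S.card * k) := by
  classical
  set Ps := T.powersetCard (k - 1) with hPs
  have hmem : ∀ A ∈ S, A ⊆ T ∧ A.card = k := fun A hA => Finset.mem_powersetCard.mp (hS hA)
  -- sum of link degrees
  have hsum1 : ∑ P ∈ Ps, (S.filter fun A => P ⊆ A).card = S.card * k := by
    calc ∑ P ∈ Ps, (S.filter fun A => P ⊆ A).card
        = ∑ P ∈ Ps, ∑ A ∈ S, if P ⊆ A then 1 else 0 := by
          simp only [Finset.card_filter]
      _ = ∑ A ∈ S, ∑ P ∈ Ps, if P ⊆ A then 1 else 0 := Finset.sum_comm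
      _ = ∑ A ∈ S, (Ps.filter fun P => P ⊆ A).card := by
          simp only [Finset.card_filter]
      _ = ∑ A ∈ S, k := by
          refine Finset.sum_congr rfl fun A hA => ?_
          obtain ⟨hAT, hAk⟩ := hmem A hA
          have heq : Ps.filter (fun P => P ⊆ A) = A.powersetCard (k - 1) := by
            ext P
            simp only [hPs, Finset.mem_filter, Finset.mem_powersetCard]
            constructor
            · rintro ⟨⟨_, hc⟩, hPA⟩; exact ⟨hPA, hc⟩
            · rintro ⟨hPA, hc⟩; exact ⟨⟨hPA.trans hAT, hc⟩, hPA⟩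
          rw [heq, Finset.card_powersetCard, hAk]
          have h1 : k - (k - 1) = 1 := by omega
          rw [← Nat.choose_symm (Nat.sub_le k 1), h1, Nat.choose_one_right]
      _ = S.card * k := by rw [Finset.sum_const, smul_eq_mul]
  -- Cauchy-Schwarz
  have hcs : (∑ P ∈ Ps, (S.filter fun A => P ⊆ A).card) ^ 2 ≤
      Ps.card * ∑ P ∈ Ps, ((S.filter fun A => P ⊆ A).card) ^ 2 :=
    sq_sum_le_card_mul_sum_sq
  -- squares vs offDiag
  have hsq : ∀ P, ((S.filter fun A => P ⊆ A).card) ^ 2 =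
      (S.filter fun A => P ⊆ A).offDiag.card + (S.filter fun A => P ⊆ A).card := by
    intro P
    have hdd : ∀ n : ℕ, n ≤ n * n := by
      intro n
      rcases Nat.eq_zero_or_pos n with h | h
      · simp [h]
      · calc n = 1 * n := (one_mul n).symm
          _ ≤ n * n := Nat.mul_le_mul_right n h
    have := hdd (S.filter fun A => P ⊆ A).card
    rw [Finset.offDiag_card, pow_two]
    omega
  -- the offDiag families are pairwise disjoint subfamilies of the edge set
  set X := (S ×ˢ S).filter (fun p => (symmDiff p.1 p.2).card = 2) with hX
  set f : Finset α → Finset (Finset α × Finset α) :=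
    fun P => (S.filter fun A => P ⊆ A).offDiag with hf
  have hinterP : ∀ P ∈ Ps, ∀ p ∈ f P, p.1 ∩ p.2 = P := by
    intro P hP p hp
    rw [hf, Finset.mem_offDiag] at hp
    obtain ⟨hp1, hp2, hne⟩ := hp
    rw [Finset.mem_filter] at hp1 hp2
    obtain ⟨hp1S, hPp1⟩ := hp1
    obtain ⟨hp2S, hPp2⟩ := hp2
    have hc1 := (hmem _ hp1S).2
    have hc2 := (hmem _ hp2S).2
    have hPc : P.card = k - 1 := (Finset.mem_powersetCard.mp hP).2
    have hlt := inter_card_lt hc1 hc2 hne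
    have hsub : P ⊆ p.1 ∩ p.2 := Finset.subset_inter hPp1 hPp2
    exact (Finset.eq_of_subset_of_card_le hsub (by omega)).symm
  have hdisj : ∀ P ∈ Ps, ∀ Q ∈ Ps, P ≠ Q → Disjoint (f P) (f Q) := by
    intro P hP Q hQ hne
    rw [Finset.disjoint_left]
    intro p hpP hpQ
    exact hne ((hinterP P hP p hpP).symm.trans (hinterP Q hQ p hpQ))
  have hfX : ∀ P ∈ Ps, f P ⊆ X := by
    intro P hP p hp
    have hint := hinterP P hP p hp
    rw [hf, Finset.mem_offDiag] at hp
    obtain ⟨hp1, hp2, hne⟩ := hp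
    rw [Finset.mem_filter] at hp1 hp2
    have hc1 := (hmem _ hp1.1).2
    have hc2 := (hmem _ hp2.1).2
    have hPc : P.card = k - 1 := (Finset.mem_powersetCard.mp hP).2
    rw [hX, Finset.mem_filter, Finset.mem_product]
    refine ⟨⟨hp1.1, hp2.1⟩, ?_⟩
    exact symmDiff_card_two hc1 hc2 (by rw [hint]; exact hPc) hk
  have hbiU : ∑ P ∈ Ps, (f P).card ≤ X.card := by
    rw [← Finset.card_biUnion hdisj]
    exact Finset.card_le_card (Finset.biUnion_subset.mpr hfX)
  -- X.card equals sum of degrees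
  have hXcard : X.card = ∑ A ∈ S, (S.filter fun B => (symmDiff A B).card = 2).card := by
    have h1 : X.card = ∑ A ∈ S, (X.filter fun p => p.1 = A).card :=
      Finset.card_eq_sum_card_fiberwise
        (fun p hp => (Finset.mem_product.mp (Finset.mem_filter.mp hp).1).1)
    rw [h1]
    refine Finset.sum_congr rfl fun A hA => ?_
    apply Finset.card_bij (fun p _ => p.2)
    · intro p hp
      rw [Finset.mem_filter] at hp
      obtain ⟨hpX, hp1⟩ := hp
      rw [hX, Finset.mem_filter, Finset.mem_product] at hpX
      rw [Finset.mem_filter]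
      exact ⟨hpX.1.2, by rw [← hp1]; exact hpX.2⟩
    · intro p hp q hq hpq
      rw [Finset.mem_filter] at hp hq
      exact Prod.ext (hp.2.trans hq.2.symm) hpq
    · intro B hB
      rw [Finset.mem_filter] at hB
      refine ⟨(A, B), ?_, rfl⟩
      rw [Finset.mem_filter, hX, Finset.mem_filter, Finset.mem_product]
      exact ⟨⟨⟨hA, hB.1⟩, hB.2⟩, rfl⟩
  -- combine
  have hN : Ps.card = T.card.choose (k - 1) := Finset.card_powersetCard _ _
  calc (S.card * k) ^ 2 = (∑ P ∈ Ps, (S.filter fun A => P ⊆ A).card) ^ 2 := by rw [hsum1]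
    _ ≤ Ps.card * ∑ P ∈ Ps, ((S.filter fun A => P ⊆ A).card) ^ 2 := hcs
    _ = Ps.card * ((∑ P ∈ Ps, (f P).card) + ∑ P ∈ Ps, (S.filter fun A => P ⊆ A).card) := by
        rw [← Finset.sum_add_distrib]
        congr 1
        exact Finset.sum_congr rfl fun P _ => hsq P
    _ ≤ Ps.card * (X.card + S.card * k) := by
        apply Nat.mul_le_mul_left
        rw [hsum1]
        omega
    _ = T.card.choose (k - 1) *
        ((∑ A ∈ S, (S.filter fun B => (symmDiff A B).card = 2).card) + S.card * k) := by
        rw [hN, hXcard]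

private lemma process {α : Type*} [DecidableEq α] (d : ℝ) :
    ∀ n (ℬ : Finset (Finset α)), ℬ.card ≤ n →
    ∃ ℰ, ℰ ⊆ ℬ ∧
      (∀ E ∈ ℰ, d ≤ ((ℰ.filter (fun B => (symmDiff E B).card = 2)).card : ℝ)) ∧
      (∑ v ∈ ℬ \ ℰ, ((ℬ.filter (fun B => (symmDiff v B).card = 2)).card : ℝ))
        ≤ 2 * d * ((ℬ \ ℰ).card : ℝ) := by
  intro n
  induction n with
  | zero =>
    intro ℬ hB
    have : ℬ = ∅ := Finset.card_eq_zero.mp (Nat.le_zero.mp hB)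
    subst this
    exact ⟨∅, Finset.Subset.refl _, by simp, by simp⟩
  | succ n ih =>
    intro ℬ hB
    by_cases h : ∀ E ∈ ℬ, d ≤ ((ℬ.filter fun B => (symmDiff E B).card = 2).card : ℝ)
    · exact ⟨ℬ, Finset.Subset.refl _, h, by simp⟩
    · push_neg at h
      obtain ⟨v, hv, hvd⟩ := h
      obtain ⟨ℰ, hsub, hdeg, hsum⟩ := ih (ℬ.erase v)
        (by rw [Finset.card_erase_of_mem hv]; omega)
      refine ⟨ℰ, hsub.trans (Finset.erase_subset _ _), hdeg, ?_⟩
      have hvE : v ∉ ℰ := fun hc => (Finset.mem_erase.mp (hsub hc)).1 rfl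
      have hvnotin : v ∉ (ℬ.erase v) \ ℰ := by
        intro hc
        exact (Finset.mem_erase.mp (Finset.mem_sdiff.mp hc).1).1 rfl
      have hins : ℬ \ ℰ = insert v ((ℬ.erase v) \ ℰ) := by
        ext w
        simp only [Finset.mem_sdiff, Finset.mem_insert, Finset.mem_erase]
        constructor
        · rintro ⟨hw, hwE⟩
          by_cases hwv : w = v
          · exact Or.inl hwv
          · exact Or.inr ⟨⟨hwv, hw⟩, hwE⟩
        · rintro (rfl | ⟨⟨_, hw⟩, hwE⟩)
          · exact ⟨hv, hvE⟩
          · exact ⟨hw, hwE⟩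
      rw [hins, Finset.sum_insert hvnotin, Finset.card_insert_of_notMem hvnotin]
      -- per-element bound
      have step : ∀ w : Finset α,
          ((ℬ.filter fun B => (symmDiff w B).card = 2).card : ℝ) ≤
          (((ℬ.erase v).filter fun B => (symmDiff w B).card = 2).card : ℝ) +
            (if (symmDiff w v).card = 2 then (1 : ℝ) else 0) := by
        intro w
        have : (ℬ.filter fun B => (symmDiff w B).card = 2) ⊆
            insert v ((ℬ.erase v).filter fun B => (symmDiff w B).card = 2) := by
          intro B hB'
          rw [Finset.mem_filter] at hB'
          rcases eq_or_ne B v with rfl | hBv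
          · exact Finset.mem_insert_self _ _
          · exact Finset.mem_insert_of_mem (Finset.mem_filter.mpr
              ⟨Finset.mem_erase.mpr ⟨hBv, hB'.1⟩, hB'.2⟩)
        have hcard := Finset.card_le_card this
        have hcard2 := Finset.card_insert_le v
          ((ℬ.erase v).filter fun B => (symmDiff w B).card = 2)
        by_cases hw : (symmDiff w v).card = 2
        · rw [if_pos hw]
          push_cast
          have : (ℬ.filter fun B => (symmDiff w B).card = 2).card ≤
              ((ℬ.erase v).filter fun B => (symmDiff w B).card = 2).card + 1 :=
            hcard.trans hcard2
          exact_mod_cast this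
        · rw [if_neg hw]
          have hveq : (ℬ.filter fun B => (symmDiff w B).card = 2) ⊆
              ((ℬ.erase v).filter fun B => (symmDiff w B).card = 2) := by
            intro B hB'
            rw [Finset.mem_filter] at hB'
            rcases eq_or_ne B v with rfl | hBv
            · exact absurd hB'.2 hw
            · exact Finset.mem_filter.mpr ⟨Finset.mem_erase.mpr ⟨hBv, hB'.1⟩, hB'.2⟩
          simpa using (Nat.cast_le (α := ℝ)).mpr (Finset.card_le_card hveq)
      -- sum the per-element bounds
      have hsum2 : (∑ w ∈ (ℬ.erase v) \ ℰ, ((ℬ.filter fun B =>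
          (symmDiff w B).card = 2).card : ℝ)) ≤
          (∑ w ∈ (ℬ.erase v) \ ℰ, (((ℬ.erase v).filter fun B =>
            (symmDiff w B).card = 2).card : ℝ)) +
          (((((ℬ.erase v) \ ℰ).filter fun w => (symmDiff w v).card = 2)).card : ℝ) := by
        have := Finset.sum_le_sum (fun w (_ : w ∈ (ℬ.erase v) \ ℰ) => step w)
        rw [Finset.sum_add_distrib] at this
        rw [Finset.sum_boole] at this
        exact this
      have hnb : ((((ℬ.erase v) \ ℰ).filter fun w => (symmDiff w v).card = 2).card : ℝ) ≤
          ((ℬ.filter fun B => (symmDiff v B).card = 2).card : ℝ) := by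
        have : (((ℬ.erase v) \ ℰ).filter fun w => (symmDiff w v).card = 2) ⊆
            (ℬ.filter fun B => (symmDiff v B).card = 2) := by
          intro w hw
          rw [Finset.mem_filter] at hw ⊢
          refine ⟨Finset.mem_of_mem_erase (Finset.mem_sdiff.mp hw.1).1, ?_⟩
          rw [symmDiff_comm]
          exact hw.2
        exact_mod_cast Finset.card_le_card this
      have hvd' : ((ℬ.filter fun B => (symmDiff v B).card = 2).card : ℝ) ≤ d :=
        le_of_lt hvd
      set_option linter.unusedTactic false in
      push_cast
      nlinarith [hsum, hsum2, hnb]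

theorem stmt_5 {α : Type*} [DecidableEq α] (T : Finset α) (t : ℕ) (ht : T.card = t)
    (hteven : Even t) (ht1 : 1 ≤ t) (ℬ : Finset (Finset α))
    (hℬ : ℬ ⊆ T.powersetCard (t / 2)) (a : ℝ) (ha : 4 / (t : ℝ) ≤ a) (ha1 : a ≤ 1) :
    ∃ ℰ : Finset (Finset α), ℰ ⊆ ℬ ∧
      (ℬ.card : ℝ) - a * (Nat.choose t (t / 2) : ℝ) < (ℰ.card : ℝ) ∧
      ∀ E ∈ ℰ, a * (t : ℝ) ^ 2 / 32 ≤
        ((ℰ.filter (fun B => (symmDiff E B).card = 2)).card : ℝ) := by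
  classical
  set k := t / 2 with hkdef
  have ht2 : 2 ≤ t := by
    obtain ⟨r, hr⟩ := hteven; omega
  have hk1 : 1 ≤ k := by omega
  have htk : t = 2 * k := by
    obtain ⟨r, hr⟩ := hteven; omega
  have ht0 : (0 : ℝ) < t := by positivity
  obtain ⟨ℰ, hsub, hdeg, hsum⟩ := process (a * (t : ℝ) ^ 2 / 32) ℬ.card ℬ le_rfl
  refine ⟨ℰ, hsub, ?_, hdeg⟩
  set S := ℬ \ ℰ with hSdef
  have hScard : S.card = ℬ.card - ℰ.card := Finset.card_sdiff_of_subset hsub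
  have hEleB : ℰ.card ≤ ℬ.card := Finset.card_le_card hsub
  have ha0 : 0 < a := lt_of_lt_of_le (by positivity) ha
  suffices hfin : (S.card : ℝ) < a * (t.choose k : ℝ) by
    have hcast : (S.card : ℝ) = (ℬ.card : ℝ) - (ℰ.card : ℝ) := by
      rw [hScard, Nat.cast_sub hEleB]
    linarith
  by_contra hcon
  push_neg at hcon
  -- S is a subfamily of the middle layer
  have hSsub : S ⊆ T.powersetCard k := Finset.Subset.trans (Finset.sdiff_subset) hℬ
  have hedge := edge_lb T k hk1 S hSsub
  rw [ht] at hedge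
  -- degree sum bounds
  have hmono : (∑ A ∈ S, ((S.filter fun B => (symmDiff A B).card = 2).card : ℝ)) ≤
      ∑ A ∈ S, ((ℬ.filter fun B => (symmDiff A B).card = 2).card : ℝ) := by
    refine Finset.sum_le_sum fun A _ => ?_
    exact_mod_cast Finset.card_le_card
      (Finset.filter_subset_filter _ (Finset.sdiff_subset))
  have hD : (∑ A ∈ S, ((S.filter fun B => (symmDiff A B).card = 2).card : ℝ)) ≤
      2 * (a * (t : ℝ) ^ 2 / 32) * (S.card : ℝ) := le_trans hmono hsum
  -- cast the edge bound
  have hedgeR : ((S.card : ℝ) * (k : ℝ)) ^ 2 ≤ (t.choose (k - 1) : ℝ) *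
      ((∑ A ∈ S, ((S.filter fun B => (symmDiff A B).card = 2).card : ℝ)) +
        (S.card : ℝ) * (k : ℝ)) := by exact_mod_cast hedge
  have hNC : (t.choose (k - 1) : ℝ) ≤ (t.choose k : ℝ) := by
    have h := Nat.choose_le_middle (k - 1) t
    rw [← hkdef] at h
    exact_mod_cast h
  have hC1 : (1 : ℝ) ≤ (t.choose k : ℝ) := by
    exact_mod_cast Nat.succ_le_of_lt (Nat.choose_pos (by omega))
  set D := (∑ A ∈ S, ((S.filter fun B => (symmDiff A B).card = 2).card : ℝ)) with hDdef
  have hD0 : 0 ≤ D := Finset.sum_nonneg fun A _ => Nat.cast_nonneg _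
  set M := (S.card : ℝ) with hMdef
  set K := (k : ℝ) with hKdef2
  set C := (t.choose k : ℝ) with hCdef
  have hK1 : (1 : ℝ) ≤ K := by rw [hKdef2]; exact_mod_cast hk1
  have hK0 : (0 : ℝ) < K := by linarith
  have htKr : (t : ℝ) = 2 * K := by rw [hKdef2]; exact_mod_cast htk
  have haK : 2 ≤ a * K := by
    rw [div_le_iff₀ ht0] at ha
    nlinarith
  have hC0 : (0 : ℝ) < C := by linarith
  have hM0 : 0 < M := lt_of_lt_of_le (by positivity) hcon
  have hM1 : (1 : ℝ) ≤ M := by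
    rw [hMdef]
    have hne : S.card ≠ 0 := by
      intro h0
      rw [hMdef, h0] at hM0
      simp at hM0
    exact_mod_cast Nat.one_le_iff_ne_zero.mpr hne
  have hMK0 : 0 ≤ M * K := mul_nonneg (by linarith) (by linarith)
  -- edge bound with C instead of N
  have hedgeC : (M * K) ^ 2 ≤ C * (D + M * K) := by
    refine le_trans hedgeR ?_
    apply mul_le_mul_of_nonneg_right hNC
    linarith
  -- lower bound on D
  have hDlow : a * M * K ^ 2 / 2 ≤ D := by
    have h6 : a * C * (M * K ^ 2) ≤ M * (M * K ^ 2) := by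
      apply mul_le_mul_of_nonneg_right hcon
      exact mul_nonneg (by linarith) (sq_nonneg K)
    have h7 : K ≤ a * K ^ 2 / 2 := by nlinarith
    have h8 : C * (M * K) ≤ C * (M * (a * K ^ 2 / 2)) := by
      apply mul_le_mul_of_nonneg_left _ (le_of_lt hC0)
      apply mul_le_mul_of_nonneg_left h7
      linarith
    have h9 : C * (a * M * K ^ 2 / 2) ≤ C * D := by nlinarith [h6, h8, hedgeC]
    exact le_of_mul_le_mul_left h9 hC0
  -- upper bound on D contradicts
  rw [htKr] at hD
  have hDup : D ≤ a * K ^ 2 / 4 * M := by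
    have heq : 2 * (a * (2 * K) ^ 2 / 32) * M = a * K ^ 2 / 4 * M := by ring
    linarith [hD, heq.le]
  have hcontra : a * (M * K ^ 2) ≤ 0 := by nlinarith [hDlow, hDup]
  have hpos : 0 < a * (M * K ^ 2) := mul_pos ha0 (mul_pos hM0 (pow_pos hK0 2))
  linarith
end

section
/- Suppose 𝒜 ⊆ 𝒫({1,...,n}) contains no two sets A, B with |B \ A| = 2|A \ B|, A \ B nonempty, and a < b for every a ∈ A \ B and b ∈ B \ A. Then |𝒜| = o(2^n); more precisely there is an absolute constant C such that |𝒜| ≤ C·e^{120(log n)^{1/2}}·2^n/n^{1/2}. -/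
open Finset

set_option maxHeartbeats 1000000

namespace Tilted

attribute [local instance 10] Classical.propDecidable

variable {n : ℕ}

/-- One tilted step: remove one low element, add two high elements. -/
def Step (l : ℕ) (X Y : Finset (Fin n)) : Prop :=
  (X \ Y).card = 1 ∧ (Y \ X).card = 2 ∧ (∀ i ∈ X \ Y, (i : ℕ) < l) ∧ (∀ i ∈ Y \ X, l ≤ (i : ℕ))

/-- The (possibly trivial) forbidden relation. -/
def Rel (l : ℕ) (A B : Finset (Fin n)) : Prop :=
  (B \ A).card = 2 * (A \ B).card ∧ (∀ i ∈ A \ B, (i : ℕ) < l) ∧ (∀ i ∈ B \ A, l ≤ (i : ℕ))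

lemma rel_refl (l : ℕ) (A : Finset (Fin n)) : Rel l A A := by
  simp [Rel]

lemma sdiff_recon (X Y : Finset (Fin n)) : (Y \ (Y \ X)) ∪ (X \ Y) = X := by
  ext i
  simp only [mem_union, mem_sdiff]
  tauto

lemma rel_step {l : ℕ} {A B C : Finset (Fin n)} (hAB : Rel l A B) (hBC : Step l B C) :
    Rel l A C := by
  obtain ⟨hcard, hlow, hhigh⟩ := hAB
  obtain ⟨hc1, hc2, slow, shigh⟩ := hBC
  -- B \ C = {t}
  obtain ⟨t, ht⟩ := Finset.card_eq_one.1 hc1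
  have htB : t ∈ B := by have := ht ▸ (Finset.mem_singleton_self t); exact (Finset.mem_sdiff.1 this).1
  have htC : t ∉ C := by have := ht ▸ (Finset.mem_singleton_self t); exact (Finset.mem_sdiff.1 this).2
  have htlow : (t : ℕ) < l := slow t (by rw [ht]; exact Finset.mem_singleton_self t)
  have htA : t ∈ A := by
    by_contra htA
    exact absurd (hhigh t (Finset.mem_sdiff.2 ⟨htB, htA⟩)) (by omega)
  -- A \ C = insert t (A \ B)
  have hAC : A \ C = insert t (A \ B) := by
    ext i
    simp only [mem_insert, mem_sdiff]
    constructor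
    · rintro ⟨hiA, hiC⟩
      by_cases hiB : i ∈ B
      · left
        have : i ∈ B \ C := Finset.mem_sdiff.2 ⟨hiB, hiC⟩
        rw [ht] at this; exact Finset.mem_singleton.1 this
      · right; exact ⟨hiA, hiB⟩
    · rintro (rfl | ⟨hiA, hiB⟩)
      · exact ⟨htA, htC⟩
      · refine ⟨hiA, fun hiC => ?_⟩
        have hhi := shigh i (Finset.mem_sdiff.2 ⟨hiC, hiB⟩)
        have hlo := hlow i (Finset.mem_sdiff.2 ⟨hiA, hiB⟩)
        omega
  -- C \ A = (C \ B) ∪ (B \ A)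
  have hCA : C \ A = (C \ B) ∪ (B \ A) := by
    ext i
    simp only [mem_union, mem_sdiff]
    constructor
    · rintro ⟨hiC, hiA⟩
      by_cases hiB : i ∈ B
      · right; exact ⟨hiB, hiA⟩
      · left; exact ⟨hiC, hiB⟩
    · rintro (⟨hiC, hiB⟩ | ⟨hiB, hiA⟩)
      · refine ⟨hiC, fun hiA => ?_⟩
        have hhi := shigh i (Finset.mem_sdiff.2 ⟨hiC, hiB⟩)
        have hlo := hlow i (Finset.mem_sdiff.2 ⟨hiA, hiB⟩)
        omega
      · refine ⟨?_, hiA⟩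
        by_contra hiC
        have : i ∈ B \ C := Finset.mem_sdiff.2 ⟨hiB, hiC⟩
        rw [ht, Finset.mem_singleton] at this
        exact hiA (this ▸ htA)
  have htAB : t ∉ A \ B := fun hm => (Finset.mem_sdiff.1 hm).2 htB
  have hdisj : Disjoint (C \ B) (B \ A) := by
    rw [Finset.disjoint_left]
    intro i hi hi'
    exact (Finset.mem_sdiff.1 hi).2 (Finset.mem_sdiff.1 hi').1
  refine ⟨?_, ?_, ?_⟩
  · rw [hAC, hCA, Finset.card_union_of_disjoint hdisj, Finset.card_insert_of_notMem htAB,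
      hc2, hcard]
    ring
  · intro i hi
    rw [hAC, Finset.mem_insert] at hi
    rcases hi with rfl | hi
    · exact htlow
    · exact hlow i hi
  · intro i hi
    rw [hCA, Finset.mem_union] at hi
    rcases hi with hi | hi
    · exact shigh i hi
    · exact hhigh i hi

/-- low count -/
noncomputable def lowc (l : ℕ) (X : Finset (Fin n)) : ℕ := (X.filter fun i : Fin n => (i : ℕ) < l).card
/-- high count -/
noncomputable def highc (l : ℕ) (X : Finset (Fin n)) : ℕ := (X.filter fun i : Fin n => l ≤ (i : ℕ)).card

noncomputable def Lev (n l a b : ℕ) : Finset (Finset (Fin n)) :=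
  univ.filter fun X => lowc l X = a ∧ highc l X = b

noncomputable def Lset (n l : ℕ) : Finset (Fin n) := univ.filter fun i : Fin n => (i : ℕ) < l
noncomputable def Hset (n l : ℕ) : Finset (Fin n) := univ.filter fun i : Fin n => l ≤ (i : ℕ)

lemma card_Lset {l : ℕ} (hl : l ≤ n) : (Lset n l).card = l := by
  classical
  have key : (Lset n l).card = (Finset.range l).card := by
    refine Finset.card_nbij (fun i => (i : ℕ)) ?_ ?_ ?_
    · intro i hi
      simp only [Lset, Finset.mem_coe, mem_filter] at hi
      exact Finset.mem_range.2 hi.2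
    · intro i hi j hj hij
      exact Fin.val_injective hij
    · intro j hj
      have hj' := Finset.mem_range.1 hj
      exact ⟨⟨j, lt_of_lt_of_le hj' hl⟩, by simp [Lset, hj'], rfl⟩
  rw [key, Finset.card_range]

lemma card_Hset {l : ℕ} : (Hset n l).card = n - l := by
  classical
  have h1 : (Hset n l) = (Lset n l)ᶜ := by
    ext i; simp [Hset, Lset, not_lt]
  by_cases hl : l ≤ n
  · rw [h1, Finset.card_compl, card_Lset hl]
    simp
  · push_neg at hl
    have : Hset n l = ∅ := by
      ext i
      simp only [Hset, mem_filter, mem_univ, true_and, Finset.notMem_empty, iff_false, not_le]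
      exact lt_of_lt_of_le i.isLt (le_of_lt hl)
    rw [this]
    simp
    omega

lemma lowc_le {l : ℕ} (hl : l ≤ n) (X : Finset (Fin n)) : lowc l X ≤ l := by
  have : lowc l X ≤ (Lset n l).card := by
    unfold lowc
    apply Finset.card_le_card
    intro i hi
    simp only [Lset, mem_filter, mem_univ, true_and]
    exact (Finset.mem_filter.1 hi).2
  rwa [card_Lset hl] at this

lemma highc_le {l : ℕ} (X : Finset (Fin n)) : highc l X ≤ n - l := by
  have : highc l X ≤ (Hset n l).card := by
    unfold highc
    apply Finset.card_le_card
    intro i hi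
    simp only [Hset, mem_filter, mem_univ, true_and]
    exact (Finset.mem_filter.1 hi).2
  rwa [card_Hset] at this

lemma filter_low_union_filter_high (l : ℕ) (X : Finset (Fin n)) :
    (X.filter fun i : Fin n => (i : ℕ) < l) ∪ (X.filter fun i : Fin n => l ≤ (i : ℕ)) = X := by
  ext i
  simp only [mem_union, mem_filter]
  by_cases h : (i : ℕ) < l
  · tauto
  · have := not_lt.1 h
    tauto

lemma stepOf {l : ℕ} {X : Finset (Fin n)} {t : Fin n} {p : Finset (Fin n)}
    (htX : t ∈ X) (htl : (t : ℕ) < l) (hp : p ⊆ Hset n l \ X) (hpc : p.card = 2) :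
    X \ ((X.erase t) ∪ p) = {t} ∧ ((X.erase t) ∪ p) \ X = p ∧ Step l X ((X.erase t) ∪ p) := by
  have hpX : ∀ i ∈ p, i ∉ X ∧ l ≤ (i : ℕ) := by
    intro i hi
    have := hp hi
    rw [Finset.mem_sdiff] at this
    refine ⟨this.2, ?_⟩
    have := this.1
    simp only [Hset, mem_filter] at this
    exact this.2
  have h1 : X \ ((X.erase t) ∪ p) = {t} := by
    ext i
    simp only [Finset.mem_sdiff, Finset.mem_union, Finset.mem_erase, Finset.mem_singleton]
    constructor
    · rintro ⟨hiX, hi⟩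
      by_contra hne
      exact hi (Or.inl ⟨hne, hiX⟩)
    · rintro rfl
      refine ⟨htX, ?_⟩
      rintro (⟨hne, -⟩ | hp')
      · exact hne rfl
      · exact (hpX _ hp').1 htX
  have h2 : ((X.erase t) ∪ p) \ X = p := by
    ext i
    simp only [Finset.mem_sdiff, Finset.mem_union, Finset.mem_erase]
    constructor
    · rintro ⟨hi | hi, hiX⟩
      · exact absurd hi.2 hiX
      · exact hi
    · intro hi
      exact ⟨Or.inr hi, (hpX i hi).1⟩
  refine ⟨h1, h2, ?_⟩
  refine ⟨by rw [h1]; simp, by rw [h2]; exact hpc, ?_, ?_⟩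
  · intro i hi
    rw [h1, Finset.mem_singleton] at hi
    exact hi ▸ htl
  · intro i hi
    rw [h2] at hi
    exact (hpX i hi).2

lemma step_lowc {l : ℕ} {X Y : Finset (Fin n)} (h : Step l X Y) :
    lowc l Y + 1 = lowc l X := by
  obtain ⟨hc1, hc2, slow, shigh⟩ := h
  obtain ⟨t, ht⟩ := Finset.card_eq_one.1 hc1
  have htX : t ∈ X := by have := ht ▸ (Finset.mem_singleton_self t); exact (Finset.mem_sdiff.1 this).1
  have htY : t ∉ Y := by have := ht ▸ (Finset.mem_singleton_self t); exact (Finset.mem_sdiff.1 this).2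
  have htl : (t : ℕ) < l := slow t (by rw [ht]; exact Finset.mem_singleton_self t)
  have key : Y.filter (fun i : Fin n => (i : ℕ) < l) =
      (X.filter fun i : Fin n => (i : ℕ) < l).erase t := by
    ext i
    simp only [mem_filter, mem_erase]
    constructor
    · rintro ⟨hiY, hil⟩
      have hiX : i ∈ X := by
        by_contra hiX
        have := shigh i (Finset.mem_sdiff.2 ⟨hiY, hiX⟩)
        omega
      exact ⟨fun hit => htY (hit ▸ hiY), hiX, hil⟩
    · rintro ⟨hit, hiX, hil⟩
      refine ⟨?_, hil⟩
      by_contra hiY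
      have : i ∈ X \ Y := Finset.mem_sdiff.2 ⟨hiX, hiY⟩
      rw [ht, Finset.mem_singleton] at this
      exact hit this
  unfold lowc
  rw [key]
  exact Finset.card_erase_add_one (Finset.mem_filter.2 ⟨htX, htl⟩)

lemma step_highc {l : ℕ} {X Y : Finset (Fin n)} (h : Step l X Y) :
    highc l Y = highc l X + 2 := by
  obtain ⟨hc1, hc2, slow, shigh⟩ := h
  obtain ⟨t, ht⟩ := Finset.card_eq_one.1 hc1
  have htl : (t : ℕ) < l := slow t (by rw [ht]; exact Finset.mem_singleton_self t)
  have key : Y.filter (fun i : Fin n => l ≤ (i : ℕ)) =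
      (X.filter fun i : Fin n => l ≤ (i : ℕ)) ∪ (Y \ X) := by
    ext i
    simp only [mem_filter, mem_union, mem_sdiff]
    constructor
    · rintro ⟨hiY, hil⟩
      by_cases hiX : i ∈ X
      · exact Or.inl ⟨hiX, hil⟩
      · exact Or.inr ⟨hiY, hiX⟩
    · rintro (⟨hiX, hil⟩ | ⟨hiY, hiX⟩)
      · refine ⟨?_, hil⟩
        by_contra hiY
        have : i ∈ X \ Y := Finset.mem_sdiff.2 ⟨hiX, hiY⟩
        rw [ht, Finset.mem_singleton] at this
        subst this
        omega
      · exact ⟨hiY, shigh i (Finset.mem_sdiff.2 ⟨hiY, hiX⟩)⟩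
  have hdisj : Disjoint (X.filter fun i : Fin n => l ≤ (i : ℕ)) (Y \ X) := by
    rw [Finset.disjoint_left]
    intro i hi hi'
    exact (Finset.mem_sdiff.1 hi').2 (Finset.mem_filter.1 hi).1
  unfold highc
  rw [key, Finset.card_union_of_disjoint hdisj, hc2]

lemma level_card_le {l a b : ℕ} (hl : l ≤ n) :
    (Lev n l a b).card ≤ l.choose a * (n - l).choose b := by
  classical
  have key : (Lev n l a b).card ≤
      (((Lset n l).powersetCard a) ×ˢ ((Hset n l).powersetCard b)).card := by
    apply Finset.card_le_card_of_injOn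
      (fun X => (X.filter fun i : Fin n => (i : ℕ) < l, X.filter fun i : Fin n => l ≤ (i : ℕ)))
    · intro X hX
      simp only [Lev, Finset.mem_coe, mem_filter, mem_univ, true_and] at hX
      rw [Finset.mem_coe, Finset.mem_product]
      constructor
      · rw [Finset.mem_powersetCard]
        exact ⟨fun i hi => by
          simp only [Lset, mem_filter, mem_univ, true_and]
          exact (Finset.mem_filter.1 hi).2, hX.1⟩
      · rw [Finset.mem_powersetCard]
        exact ⟨fun i hi => by
          simp only [Hset, mem_filter, mem_univ, true_and]
          exact (Finset.mem_filter.1 hi).2, hX.2⟩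
    · intro X hX Y hY hXY
      have h1 := congrArg Prod.fst hXY
      have h2 := congrArg Prod.snd hXY
      simp only at h1 h2
      rw [← filter_low_union_filter_high l X, ← filter_low_union_filter_high l Y, h1, h2]
  rwa [Finset.card_product, Finset.card_powersetCard, Finset.card_powersetCard,
    card_Lset hl, card_Hset] at key

/-- shadow restricted to a level -/
noncomputable def Sh (n l a b : ℕ) (F : Finset (Finset (Fin n))) : Finset (Finset (Fin n)) :=
  (Lev n l a b).filter fun Y => ∃ X ∈ F, Step l X Y

lemma localLYM {l a b : ℕ} (hl : l ≤ n) (ha : 1 ≤ a) (hb : b + 2 ≤ n - l)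
    (F : Finset (Finset (Fin n))) (hF : F ⊆ Lev n l a b) :
    F.card * (a * (n - l - b).choose 2) ≤
      (Sh n l (a - 1) (b + 2) F).card * ((l - (a - 1)) * (b + 2).choose 2) := by
  classical
  apply Finset.card_mul_le_card_mul (Step l)
  · -- out-degree lower bound
    intro X hX
    have hXlev := hF hX
    simp only [Lev, mem_filter, mem_univ, true_and] at hXlev
    obtain ⟨hXa, hXb⟩ := hXlev
    have hHX : (Hset n l \ X).card = n - l - b := by
      have : Hset n l \ X = Hset n l \ (X.filter fun i : Fin n => l ≤ (i : ℕ)) := by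
        ext i
        simp only [mem_sdiff, mem_filter, Hset, mem_univ, true_and]
        tauto
      rw [this, Finset.card_sdiff_of_subset (fun i hi => by
        simp only [Hset, mem_filter, mem_univ, true_and]
        exact (Finset.mem_filter.1 hi).2), card_Hset]
      show n - l - highc l X = n - l - b
      rw [hXb]
    have key : ((X.filter fun i : Fin n => (i : ℕ) < l) ×ˢ ((Hset n l \ X).powersetCard 2)).card ≤
        (Finset.bipartiteAbove (Step l) (Sh n l (a - 1) (b + 2) F) X).card := by
      apply Finset.card_le_card_of_injOn (fun q => (X.erase q.1) ∪ q.2)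
      · rintro ⟨t, p⟩ hq
        show (X.erase t ∪ p) ∈ Finset.bipartiteAbove (Step l) (Sh n l (a - 1) (b + 2) F) X
        simp only [Finset.mem_coe, Finset.mem_product, Finset.mem_filter, Finset.mem_powersetCard] at hq
        obtain ⟨⟨ht1, ht2⟩, hp1, hp2⟩ := hq
        obtain ⟨h1, h2, hstep⟩ := stepOf ht1 ht2 hp1 hp2
        simp only [Finset.bipartiteAbove, Finset.mem_filter]
        refine ⟨?_, hstep⟩
        simp only [Sh, Lev, Finset.mem_filter, mem_univ, true_and]
        have e1 := step_lowc hstep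
        have e2 := step_highc hstep
        exact ⟨⟨by omega, by omega⟩, X, hX, hstep⟩
      · rintro ⟨t, p⟩ hq ⟨t', p'⟩ hq' heq
        simp only [Finset.mem_coe, Finset.mem_product, Finset.mem_filter,
          Finset.mem_powersetCard] at hq hq'
        obtain ⟨h1, h2, _⟩ := stepOf hq.1.1 hq.1.2 hq.2.1 hq.2.2
        obtain ⟨h1', h2', _⟩ := stepOf hq'.1.1 hq'.1.2 hq'.2.1 hq'.2.2
        have heq : X.erase t ∪ p = X.erase t' ∪ p' := heq
        have ht : ({t} : Finset (Fin n)) = {t'} := by rw [← h1, ← h1', heq]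
        have hp : p = p' := by rw [← h2, ← h2', heq]
        have := Finset.singleton_injective ht
        simp [this, hp]
    rw [Finset.card_product, Finset.card_powersetCard, hHX] at key
    have hXa' : (X.filter fun i : Fin n => (i : ℕ) < l).card = a := hXa
    rwa [hXa'] at key
  · -- in-degree upper bound
    intro Y hY
    simp only [Sh, Lev, Finset.mem_filter, mem_univ, true_and] at hY
    obtain ⟨⟨hYa, hYb⟩, _⟩ := hY
    have key : (Finset.bipartiteBelow (Step l) F Y).card ≤
        (((Lset n l \ Y).powersetCard 1) ×ˢ ((Y.filter fun i : Fin n => l ≤ (i : ℕ)).powersetCard 2)).card := by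
      apply Finset.card_le_card_of_injOn (fun X => (X \ Y, Y \ X))
      · intro X hX
        simp only [Finset.bipartiteBelow, Finset.mem_coe, Finset.mem_filter] at hX
        obtain ⟨hXF, hstep⟩ := hX
        obtain ⟨hc1, hc2, slow, shigh⟩ := hstep
        rw [Finset.mem_coe, Finset.mem_product]
        constructor
        · rw [Finset.mem_powersetCard]
          refine ⟨fun i hi => ?_, hc1⟩
          rw [Finset.mem_sdiff]
          have him := Finset.mem_sdiff.1 hi
          refine ⟨?_, him.2⟩
          simp only [Lset, mem_filter, mem_univ, true_and]
          exact slow i hi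
        · rw [Finset.mem_powersetCard]
          refine ⟨fun i hi => ?_, hc2⟩
          rw [Finset.mem_filter]
          exact ⟨(Finset.mem_sdiff.1 hi).1, shigh i hi⟩
      · intro X hX X' hX' heq
        simp only at heq
        have h1 := congrArg Prod.fst heq
        have h2 := congrArg Prod.snd heq
        simp only at h1 h2
        rw [← sdiff_recon X Y, ← sdiff_recon X' Y, h1, h2]
    rw [Finset.card_product, Finset.card_powersetCard, Finset.card_powersetCard,
      Nat.choose_one_right] at key
    have hLY : (Lset n l \ Y).card = l - (a - 1) := by
      have : Lset n l \ Y = Lset n l \ (Y.filter fun i : Fin n => (i : ℕ) < l) := by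
        ext i
        simp only [mem_sdiff, mem_filter, Lset, mem_univ, true_and]
        tauto
      rw [this, Finset.card_sdiff_of_subset (fun i hi => by
        simp only [Lset, mem_filter, mem_univ, true_and]
        exact (Finset.mem_filter.1 hi).2), card_Lset hl]
      show l - lowc l Y = l - (a - 1)
      rw [hYa]
    have hYh : (Y.filter fun i : Fin n => l ≤ (i : ℕ)).card = b + 2 := hYb
    rw [hLY, hYh] at key
    exact key

lemma chooseId {l h a b : ℕ} (ha : 1 ≤ a) (hal : a ≤ l) (hb : b + 2 ≤ h) :
    (l.choose a * h.choose b) * (a * (h - b).choose 2) =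
      (l.choose (a - 1) * h.choose (b + 2)) * ((l - (a - 1)) * (b + 2).choose 2) := by
  have e1 : l.choose a * a = l.choose (a - 1) * (l - (a - 1)) := by
    have := Nat.choose_succ_right_eq l (a - 1)
    rwa [show a - 1 + 1 = a by omega] at this
  have e2 : h.choose b * (h - b).choose 2 = h.choose (b + 2) * (b + 2).choose 2 := by
    have i1 : h.choose (b + 2) * (b + 2).choose 2 = h.choose 2 * (h - 2).choose b := by
      have := Nat.choose_mul (n := h) (k := b + 2) (s := 2) (by omega)
      rwa [show b + 2 - 2 = b by omega] at this
    have i2 : h.choose (h - b) * (h - b).choose 2 = h.choose 2 * (h - 2).choose (h - b - 2) := by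
      exact Nat.choose_mul (n := h) (k := h - b) (s := 2) (by omega)
    have i3 : h.choose (h - b) = h.choose b := Nat.choose_symm (by omega)
    have i4 : (h - 2).choose (h - b - 2) = (h - 2).choose b := by
      rw [show h - b - 2 = (h - 2) - b by omega]
      exact Nat.choose_symm (by omega)
    rw [i3, i4] at i2
    rw [i1, ← i2]
  calc (l.choose a * h.choose b) * (a * (h - b).choose 2)
      = (l.choose a * a) * (h.choose b * (h - b).choose 2) := by ring
    _ = (l.choose (a - 1) * (l - (a - 1))) * (h.choose (b + 2) * (b + 2).choose 2) := by
        rw [e1, e2]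
    _ = (l.choose (a - 1) * h.choose (b + 2)) * ((l - (a - 1)) * (b + 2).choose 2) := by ring

/-- Real weight of a level. -/
noncomputable def Wr (n l a b : ℕ) : ℝ := (l.choose a : ℝ) * ((n - l).choose b : ℝ)

lemma Wr_pos {l a b : ℕ} (hal : a ≤ l) (hb : b ≤ n - l) : 0 < Wr n l a b := by
  have h1 := Nat.choose_pos hal
  have h2 := Nat.choose_pos hb
  unfold Wr
  positivity

lemma localLYM_real {l a b : ℕ} (hl : l ≤ n) (ha : 1 ≤ a) (hal : a ≤ l) (hb : b + 2 ≤ n - l)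
    (F : Finset (Finset (Fin n))) (hF : F ⊆ Lev n l a b) :
    (F.card : ℝ) / Wr n l a b ≤ ((Sh n l (a - 1) (b + 2) F).card : ℝ) / Wr n l (a - 1) (b + 2) := by
  set h := n - l with hh
  have hWpos : 0 < Wr n l a b := Wr_pos hal (by omega)
  have hW'pos : 0 < Wr n l (a - 1) (b + 2) := Wr_pos (by omega) (by omega)
  have hdpos : (0 : ℝ) < (a * (h - b).choose 2 : ℕ) := by
    have : 0 < (h - b).choose 2 := Nat.choose_pos (by omega)
    have : 0 < a * (h - b).choose 2 := Nat.mul_pos (by omega) this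
    exact_mod_cast this
  have hepos : (0 : ℝ) < ((l - (a - 1)) * (b + 2).choose 2 : ℕ) := by
    have h1 : 0 < (b + 2).choose 2 := Nat.choose_pos (by omega)
    have : 0 < (l - (a - 1)) * (b + 2).choose 2 := Nat.mul_pos (by omega) h1
    exact_mod_cast this
  have key : (F.card : ℝ) * (a * (h - b).choose 2 : ℕ) ≤
      ((Sh n l (a - 1) (b + 2) F).card : ℝ) * ((l - (a - 1)) * (b + 2).choose 2 : ℕ) := by
    exact_mod_cast localLYM hl ha hb F hF
  have hid : Wr n l a b * (a * (h - b).choose 2 : ℕ) =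
      Wr n l (a - 1) (b + 2) * ((l - (a - 1)) * (b + 2).choose 2 : ℕ) := by
    unfold Wr
    rw [← hh]
    push_cast
    have := chooseId (l := l) (h := h) ha hal hb
    exact_mod_cast by exact_mod_cast congrArg (fun x : ℕ => (x : ℝ)) this
  rw [div_le_div_iff₀ hWpos hW'pos]
  set d : ℝ := ((a * (h - b).choose 2 : ℕ) : ℝ)
  set e : ℝ := (((l - (a - 1)) * (b + 2).choose 2 : ℕ) : ℝ)
  have hde : 0 < d * e := mul_pos hdpos hepos
  apply le_of_mul_le_mul_right _ hde
  calc (F.card : ℝ) * Wr n l (a - 1) (b + 2) * (d * e)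
      = ((F.card : ℝ) * d) * (Wr n l (a - 1) (b + 2) * e) := by ring
    _ = ((F.card : ℝ) * d) * (Wr n l a b * d) := by rw [← hid]
    _ ≤ (((Sh n l (a - 1) (b + 2) F).card : ℝ) * e) * (Wr n l a b * d) := by
        apply mul_le_mul_of_nonneg_right key
        positivity
    _ = ((Sh n l (a - 1) (b + 2) F).card : ℝ) * Wr n l a b * (d * e) := by ring

/-- number of members of 𝒜 at a level -/
noncomputable def mA (𝒜 : Finset (Finset (Fin n))) (l a b : ℕ) : ℕ :=
  (𝒜.filter fun X => lowc l X = a ∧ highc l X = b).card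

lemma lym_ind {l : ℕ} (hl : l ≤ n) (𝒜 : Finset (Finset (Fin n)))
    (hA : ∀ A ∈ 𝒜, ∀ B ∈ 𝒜, Rel l A B → A = B)
    (a₀ b₀ : ℕ) (ha₀ : a₀ ≤ l) :
    ∀ j, j ≤ a₀ → b₀ + 2 * j ≤ n - l →
    ∃ D : Finset (Finset (Fin n)), D ⊆ Lev n l (a₀ - j) (b₀ + 2 * j) ∧
      (∀ Z ∈ D, ∃ A ∈ 𝒜, Rel l A Z) ∧
      ∑ i ∈ Finset.range (j + 1),
          (mA 𝒜 l (a₀ - i) (b₀ + 2 * i) : ℝ) / Wr n l (a₀ - i) (b₀ + 2 * i)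
        ≤ (D.card : ℝ) / Wr n l (a₀ - j) (b₀ + 2 * j) := by
  intro j
  induction j with
  | zero =>
    intro _ hb0
    refine ⟨𝒜.filter fun X => lowc l X = a₀ ∧ highc l X = b₀, ?_, ?_, ?_⟩
    · intro X hX
      have h := (Finset.mem_filter.1 hX).2
      simp only [Lev, Finset.mem_filter, Finset.mem_univ, true_and, Nat.sub_zero,
        Nat.mul_zero, Nat.add_zero]
      exact h
    · intro Z hZ
      exact ⟨Z, (Finset.mem_filter.1 hZ).1, rel_refl l Z⟩
    · rw [zero_add, Finset.sum_range_one]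
      simp only [Nat.sub_zero, Nat.mul_zero, Nat.add_zero]
      exact le_of_eq (by rfl)
  | succ j IH =>
    intro hj hb
    obtain ⟨D, hDlev, hDinv, hDsum⟩ := IH (by omega) (by omega)
    set a := a₀ - j with hadef
    set b := b₀ + 2 * j with hbdef
    have ha1 : 1 ≤ a := by omega
    have hal : a ≤ l := by omega
    have hb2 : b + 2 ≤ n - l := by omega
    have hstep := localLYM_real hl ha1 hal hb2 D hDlev
    set S := Sh n l (a - 1) (b + 2) D with hSdef
    set T := 𝒜.filter fun X => lowc l X = a - 1 ∧ highc l X = b + 2 with hTdef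
    have hdisj : Disjoint S T := by
      rw [Finset.disjoint_left]
      intro Z hZS hZT
      simp only [hSdef, Sh, Finset.mem_filter] at hZS
      obtain ⟨-, X, hXD, hXZ⟩ := hZS
      obtain ⟨A, hA𝒜, hAX⟩ := hDinv X hXD
      have hAZ : Rel l A Z := rel_step hAX hXZ
      have hZ𝒜 : Z ∈ 𝒜 := (Finset.mem_filter.1 hZT).1
      have hAeq : A = Z := hA A hA𝒜 Z hZ𝒜 hAZ
      subst hAeq
      obtain ⟨hcard, _, _⟩ := hAX
      obtain ⟨hs1, hs2, _, _⟩ := hXZ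
      -- hcard : (X \ Z).card = 2 * (Z \ X).card, hs1 : (X\Z).card = 1, hs2 : (Z\X).card = 2
      omega
    have e1 : a₀ - (j + 1) = a - 1 := by omega
    have e2 : b₀ + 2 * (j + 1) = b + 2 := by omega
    rw [e1, e2]
    refine ⟨S ∪ T, ?_, ?_, ?_⟩
    · intro Z hZ
      rcases Finset.mem_union.1 hZ with hZ | hZ
      · exact Finset.filter_subset _ _ hZ
      · simp only [hTdef, Finset.mem_filter] at hZ
        simp only [Lev, Finset.mem_filter, Finset.mem_univ, true_and]
        exact hZ.2
    · intro Z hZ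
      rcases Finset.mem_union.1 hZ with hZ | hZ
      · simp only [hSdef, Sh, Finset.mem_filter] at hZ
        obtain ⟨-, X, hXD, hXZ⟩ := hZ
        obtain ⟨A, hA𝒜, hAX⟩ := hDinv X hXD
        exact ⟨A, hA𝒜, rel_step hAX hXZ⟩
      · exact ⟨Z, (Finset.mem_filter.1 hZ).1, rel_refl l Z⟩
    · rw [Finset.sum_range_succ]
      have eterm : (mA 𝒜 l (a₀ - (j + 1)) (b₀ + 2 * (j + 1)) : ℝ) /
            Wr n l (a₀ - (j + 1)) (b₀ + 2 * (j + 1))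
          = (T.card : ℝ) / Wr n l (a - 1) (b + 2) := by
        rw [e1, e2]; rfl
      rw [eterm]
      have hcard : ((S ∪ T).card : ℝ) = (S.card : ℝ) + (T.card : ℝ) := by
        rw [Finset.card_union_of_disjoint hdisj]; push_cast; ring
      rw [hcard, add_div]
      exact add_le_add (le_trans hDsum hstep) (le_refl _)

lemma class_bound {l : ℕ} (hl : l ≤ n) (𝒜 : Finset (Finset (Fin n)))
    (hA : ∀ A ∈ 𝒜, ∀ B ∈ 𝒜, Rel l A B → A = B) (c : ℕ) (Wb : ℝ) (hWb : 0 ≤ Wb)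
    (hW : ∀ a b, a ≤ l → b ≤ n - l → 2 * a + b = c → Wr n l a b ≤ Wb) :
    ((𝒜.filter fun X => 2 * lowc l X + highc l X = c ∧ highc l X + 2 ≤ n - l).card : ℝ) ≤ Wb := by
  classical
  set G := 𝒜.filter fun X => 2 * lowc l X + highc l X = c ∧ highc l X + 2 ≤ n - l with hGdef
  set a₀ := min l (c / 2) with ha₀def
  set b₀ := c - 2 * a₀ with hb₀def
  have hmemG : ∀ X ∈ G, lowc l X ≤ a₀ ∧ highc l X = b₀ + 2 * (a₀ - lowc l X) ∧
      highc l X + 2 ≤ n - l := by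
    intro X hX
    simp only [hGdef, Finset.mem_filter] at hX
    obtain ⟨-, hc, hgood⟩ := hX
    have h1 : lowc l X ≤ l := lowc_le hl X
    have h2 : lowc l X ≤ c / 2 := Nat.le_div_iff_mul_le (by norm_num) |>.2 (by omega)
    have h3 : lowc l X ≤ a₀ := le_min h1 h2
    have h4 : 2 * a₀ ≤ c := by
      have : a₀ ≤ c / 2 := min_le_right _ _
      have := Nat.div_mul_le_self c 2
      omega
    exact ⟨h3, by omega, hgood⟩
  by_cases hbad : b₀ + 2 ≤ n - l
  case neg =>
    have : G = ∅ := by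
      rw [Finset.eq_empty_iff_forall_notMem]
      intro X hX
      obtain ⟨h3, h5, hgood⟩ := hmemG X hX
      omega
    rw [this]
    simpa using hWb
  case pos =>
    set jm := min a₀ ((n - l - b₀ - 2) / 2) with hjmdef
    have hjm1 : jm ≤ a₀ := min_le_left _ _
    have hjm2 : b₀ + 2 * jm + 2 ≤ n - l := by
      have h1 : jm ≤ (n - l - b₀ - 2) / 2 := min_le_right _ _
      have h2 : 2 * jm ≤ n - l - b₀ - 2 := by
        have := (Nat.le_div_iff_mul_le (k := 2) (by norm_num)).1 h1
        omega
      omega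
    obtain ⟨D, hDlev, hDinv, hDsum⟩ := lym_ind hl 𝒜 hA a₀ b₀ (min_le_left _ _) jm hjm1 (by omega)
    have hWrpos : ∀ i ∈ Finset.range (jm + 1), 0 < Wr n l (a₀ - i) (b₀ + 2 * i) := by
      intro i hi
      have hi' := Finset.mem_range.1 hi
      exact Wr_pos (by omega) (by omega)
    have hsum1 : ∑ i ∈ Finset.range (jm + 1),
        (mA 𝒜 l (a₀ - i) (b₀ + 2 * i) : ℝ) / Wr n l (a₀ - i) (b₀ + 2 * i) ≤ 1 := by
      refine le_trans hDsum ?_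
      rw [div_le_one (Wr_pos (by omega) (by omega))]
      calc (D.card : ℝ) ≤ ((Lev n l (a₀ - jm) (b₀ + 2 * jm)).card : ℝ) := by
            exact_mod_cast Finset.card_le_card hDlev
        _ ≤ Wr n l (a₀ - jm) (b₀ + 2 * jm) := by
            unfold Wr
            exact_mod_cast level_card_le hl
    -- fiber decomposition of G
    have hfib : G.card = ∑ i ∈ Finset.range (jm + 1),
        (G.filter fun X => a₀ - lowc l X = i).card := by
      apply Finset.card_eq_sum_card_fiberwise
      intro X hX
      obtain ⟨h3, h5, hgood⟩ := hmemG X hX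
      simp only [Finset.mem_coe, Finset.mem_range]
      have : a₀ - lowc l X ≤ (n - l - b₀ - 2) / 2 := by
        apply (Nat.le_div_iff_mul_le (by norm_num)).2
        omega
      omega
    have hfible : ∀ i ∈ Finset.range (jm + 1),
        ((G.filter fun X => a₀ - lowc l X = i).card : ℝ)
          ≤ (mA 𝒜 l (a₀ - i) (b₀ + 2 * i) : ℝ) := by
      intro i hi
      have : (G.filter fun X => a₀ - lowc l X = i)
          ⊆ 𝒜.filter fun X => lowc l X = a₀ - i ∧ highc l X = b₀ + 2 * i := by
        intro X hX
        have hXG := Finset.mem_filter.1 hX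
        obtain ⟨h3, h5, hgood⟩ := hmemG X hXG.1
        have hXA : X ∈ 𝒜 := (Finset.mem_filter.1 hXG.1).1
        have hlow : lowc l X = a₀ - i := by omega
        refine Finset.mem_filter.2 ⟨hXA, hlow, by omega⟩
      exact_mod_cast Finset.card_le_card this
    calc (G.card : ℝ) = ∑ i ∈ Finset.range (jm + 1),
          ((G.filter fun X => a₀ - lowc l X = i).card : ℝ) := by
          rw [hfib]; push_cast; ring
      _ ≤ ∑ i ∈ Finset.range (jm + 1), (mA 𝒜 l (a₀ - i) (b₀ + 2 * i) : ℝ) :=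
          Finset.sum_le_sum hfible
      _ ≤ ∑ i ∈ Finset.range (jm + 1),
            ((mA 𝒜 l (a₀ - i) (b₀ + 2 * i) : ℝ) / Wr n l (a₀ - i) (b₀ + 2 * i)) * Wb := by
          apply Finset.sum_le_sum
          intro i hi
          have hWrp := hWrpos i hi
          have hi' := Finset.mem_range.1 hi
          have hWble : Wr n l (a₀ - i) (b₀ + 2 * i) ≤ Wb := by
            apply hW _ _ (by omega) (by omega)
            have h4 : 2 * a₀ ≤ c := by
              have : a₀ ≤ c / 2 := min_le_right _ _
              have := Nat.div_mul_le_self c 2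
              omega
            omega
          calc (mA 𝒜 l (a₀ - i) (b₀ + 2 * i) : ℝ)
              = ((mA 𝒜 l (a₀ - i) (b₀ + 2 * i) : ℝ) / Wr n l (a₀ - i) (b₀ + 2 * i)) *
                  Wr n l (a₀ - i) (b₀ + 2 * i) := by
                field_simp
            _ ≤ _ := by
                apply mul_le_mul_of_nonneg_left hWble
                positivity
      _ = (∑ i ∈ Finset.range (jm + 1),
            (mA 𝒜 l (a₀ - i) (b₀ + 2 * i) : ℝ) / Wr n l (a₀ - i) (b₀ + 2 * i)) * Wb := by
          rw [Finset.sum_mul]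
      _ ≤ 1 * Wb := mul_le_mul_of_nonneg_right hsum1 hWb
      _ = Wb := one_mul Wb

lemma junk_bound {l : ℕ} (hl : l ≤ n) (h1 : 1 ≤ n - l) :
    ((univ : Finset (Finset (Fin n))).filter fun X => ¬(highc l X + 2 ≤ n - l)).card ≤
      2 ^ l * (n - l + 1) := by
  classical
  set h := n - l with hh
  have key : ((univ : Finset (Finset (Fin n))).filter fun X => ¬(highc l X + 2 ≤ n - l)).card ≤
      ((Lset n l).powerset ×ˢ ((Hset n l).powersetCard (h - 1) ∪ (Hset n l).powersetCard h)).card := by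
    apply Finset.card_le_card_of_injOn
      (fun X => (X.filter fun i : Fin n => (i : ℕ) < l, X.filter fun i : Fin n => l ≤ (i : ℕ)))
    · intro X hX
      simp only [Finset.mem_coe, Finset.mem_filter, Finset.mem_univ, true_and, not_le] at hX
      rw [Finset.mem_coe, Finset.mem_product]
      constructor
      · rw [Finset.mem_powerset]
        intro i hi
        simp only [Lset, mem_filter, mem_univ, true_and]
        exact (Finset.mem_filter.1 hi).2
      · have hsub : (X.filter fun i : Fin n => l ≤ (i : ℕ)) ⊆ Hset n l := by
          intro i hi
          simp only [Hset, mem_filter, mem_univ, true_and]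
          exact (Finset.mem_filter.1 hi).2
        have hhc : highc l X ≤ h := highc_le X
        rw [Finset.mem_union]
        by_cases hc : highc l X = h
        · right
          rw [Finset.mem_powersetCard]
          exact ⟨hsub, hc⟩
        · left
          rw [Finset.mem_powersetCard]
          refine ⟨hsub, ?_⟩
          show highc l X = h - 1
          omega
    · intro X hX Y hY hXY
      have h1' := congrArg Prod.fst hXY
      have h2' := congrArg Prod.snd hXY
      simp only at h1' h2'
      rw [← filter_low_union_filter_high l X, ← filter_low_union_filter_high l Y, h1', h2']
  have e1 : (n - l).choose (n - l - 1) = n - l := by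
    have h2 := Nat.choose_symm (n := n - l) (k := n - l - 1) (Nat.sub_le _ _)
    rw [show (n - l) - (n - l - 1) = 1 by omega] at h2
    rw [← h2, Nat.choose_one_right]
  rw [Finset.card_product, Finset.card_powerset, card_Lset hl] at key
  rw [hh] at key
  refine le_trans key ?_
  refine Nat.mul_le_mul_left _ ?_
  refine le_trans (Finset.card_union_le _ _) ?_
  rw [Finset.card_powersetCard, Finset.card_powersetCard, card_Hset]
  rw [show h - 1 = n - l - 1 from by rw [hh]]
  rw [e1, Nat.choose_self]

lemma combi_main {l : ℕ} (hl : l ≤ n) (h1 : 1 ≤ n - l) (𝒜 : Finset (Finset (Fin n)))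
    (hA : ∀ A ∈ 𝒜, ∀ B ∈ 𝒜, Rel l A B → A = B) (Wb : ℕ → ℝ) (hWb0 : ∀ c, 0 ≤ Wb c)
    (hW : ∀ c a b, a ≤ l → b ≤ n - l → 2 * a + b = c → Wr n l a b ≤ Wb c) :
    (𝒜.card : ℝ) ≤ (∑ c ∈ Finset.range (2 * l + (n - l) + 1), Wb c) +
      (2 : ℝ) ^ l * (n - l + 1) := by
  classical
  have hsplit : 𝒜.card = (𝒜.filter fun X => highc l X + 2 ≤ n - l).card +
      (𝒜.filter fun X => ¬(highc l X + 2 ≤ n - l)).card :=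
    (Finset.card_filter_add_card_filter_not _).symm
  have hjunk : ((𝒜.filter fun X => ¬(highc l X + 2 ≤ n - l)).card : ℝ) ≤
      (2 : ℝ) ^ l * (n - l + 1) := by
    have hsub : (𝒜.filter fun X => ¬(highc l X + 2 ≤ n - l)) ⊆
        (univ.filter fun X => ¬(highc l X + 2 ≤ n - l)) := by
      intro X hX
      exact Finset.mem_filter.2 ⟨Finset.mem_univ X, (Finset.mem_filter.1 hX).2⟩
    have := le_trans (Finset.card_le_card hsub) (junk_bound hl h1)
    calc ((𝒜.filter fun X => ¬(highc l X + 2 ≤ n - l)).card : ℝ)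
        ≤ ((2 ^ l * (n - l + 1) : ℕ) : ℝ) := by exact_mod_cast this
      _ = (2 : ℝ) ^ l * (n - l + 1) := by push_cast [Nat.cast_sub hl]; ring
  have hgood : ((𝒜.filter fun X => highc l X + 2 ≤ n - l).card : ℝ) ≤
      ∑ c ∈ Finset.range (2 * l + (n - l) + 1), Wb c := by
    set G := 𝒜.filter fun X => highc l X + 2 ≤ n - l with hGdef
    have hfib : G.card = ∑ c ∈ Finset.range (2 * l + (n - l) + 1),
        (G.filter fun X => 2 * lowc l X + highc l X = c).card := by
      apply Finset.card_eq_sum_card_fiberwise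
      intro X hX
      simp only [Finset.mem_coe, Finset.mem_range]
      have := lowc_le hl X
      have := highc_le (l := l) X
      omega
    rw [hfib]
    push_cast
    apply Finset.sum_le_sum
    intro c _
    have hsub : (G.filter fun X => 2 * lowc l X + highc l X = c) ⊆
        𝒜.filter fun X => 2 * lowc l X + highc l X = c ∧ highc l X + 2 ≤ n - l := by
      intro X hX
      have h1' := Finset.mem_filter.1 hX
      have h2' := Finset.mem_filter.1 h1'.1
      exact Finset.mem_filter.2 ⟨h2'.1, h1'.2, h2'.2⟩
    calc ((G.filter fun X => 2 * lowc l X + highc l X = c).card : ℝ)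
        ≤ ((𝒜.filter fun X => 2 * lowc l X + highc l X = c ∧
            highc l X + 2 ≤ n - l).card : ℝ) := by exact_mod_cast Finset.card_le_card hsub
      _ ≤ Wb c := class_bound hl 𝒜 hA c (Wb c) (hWb0 c) (fun a b h1 h2 h3 => hW c a b h1 h2 h3)
  calc (𝒜.card : ℝ)
      = ((𝒜.filter fun X => highc l X + 2 ≤ n - l).card : ℝ) +
        ((𝒜.filter fun X => ¬(highc l X + 2 ≤ n - l)).card : ℝ) := by
        rw [hsplit]; push_cast; ring
    _ ≤ _ := add_le_add hgood hjunk

lemma sqrt_mul_le_sqrt_mul {a b x y : ℝ} (ha : 0 ≤ a) (hx : 0 ≤ x) (hy : 0 ≤ y)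
    (h : a^2 * x ≤ b^2 * y) (hb : 0 ≤ b) : a * Real.sqrt x ≤ b * Real.sqrt y := by
  have h1 : a * Real.sqrt x = Real.sqrt (a^2 * x) := by
    rw [Real.sqrt_mul (by positivity), Real.sqrt_sq ha]
  have h2 : b * Real.sqrt y = Real.sqrt (b^2 * y) := by
    rw [Real.sqrt_mul (by positivity), Real.sqrt_sq hb]
  rw [h1, h2]
  exact Real.sqrt_le_sqrt h

lemma central_binom_le (q : ℕ) :
    (Nat.centralBinom q : ℝ) ≤ 4 ^ q / Real.sqrt (3 * (q : ℝ) + 1) := by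
  induction q with
  | zero => simp [Nat.centralBinom]
  | succ q IH =>
    have hrec : ((q : ℝ) + 1) * (Nat.centralBinom (q + 1) : ℝ) =
        2 * (2 * (q : ℝ) + 1) * (Nat.centralBinom q : ℝ) := by
      have := congrArg (Nat.cast : ℕ → ℝ) (Nat.succ_mul_centralBinom_succ q)
      push_cast at this
      convert this using 1 <;> ring
    have hs0 : (0:ℝ) < Real.sqrt (3 * (q : ℝ) + 1) := Real.sqrt_pos.2 (by positivity)
    have ht0 : (0:ℝ) < Real.sqrt (3 * ((q : ℝ) + 1) + 1) := Real.sqrt_pos.2 (by positivity)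
    have hkey : 2 * (2 * (q:ℝ) + 1) * Real.sqrt (3 * ((q : ℝ) + 1) + 1) ≤
        4 * ((q:ℝ) + 1) * Real.sqrt (3 * (q : ℝ) + 1) := by
      apply sqrt_mul_le_sqrt_mul (by positivity) (by positivity) (by positivity) _ (by positivity)
      nlinarith [sq_nonneg ((q:ℝ))]
    have goalcast : (3 * ((q+1 : ℕ) : ℝ) + 1) = 3 * ((q:ℝ)+1) + 1 := by push_cast; ring
    rw [goalcast, le_div_iff₀ ht0]
    have hq1 : (0:ℝ) < (q:ℝ) + 1 := by positivity
    apply le_of_mul_le_mul_left _ hq1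
    have hIH' : (Nat.centralBinom q : ℝ) * Real.sqrt (3 * (q : ℝ) + 1) ≤ 4^q := by
      rw [← le_div_iff₀ hs0]
      exact IH
    calc ((q:ℝ) + 1) * ((Nat.centralBinom (q+1) : ℝ) * Real.sqrt (3 * ((q : ℝ) + 1) + 1))
        = (((q:ℝ) + 1) * (Nat.centralBinom (q+1) : ℝ)) * Real.sqrt (3 * ((q : ℝ) + 1) + 1) := by
          ring
      _ = (2 * (2 * (q:ℝ) + 1) * (Nat.centralBinom q : ℝ)) * Real.sqrt (3 * ((q : ℝ) + 1) + 1) := by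
          rw [hrec]
      _ = (2 * (2 * (q:ℝ) + 1) * Real.sqrt (3 * ((q : ℝ) + 1) + 1)) * (Nat.centralBinom q : ℝ) := by
          ring
      _ ≤ (4 * ((q:ℝ) + 1) * Real.sqrt (3 * (q : ℝ) + 1)) * (Nat.centralBinom q : ℝ) := by
          apply mul_le_mul_of_nonneg_right hkey (by positivity)
      _ = (4 * ((q:ℝ) + 1)) * ((Nat.centralBinom q : ℝ) * Real.sqrt (3 * (q : ℝ) + 1)) := by
          ring
      _ ≤ (4 * ((q:ℝ) + 1)) * 4^q := by
          apply mul_le_mul_of_nonneg_left hIH' (by positivity)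
      _ = ((q:ℝ) + 1) * 4^(q+1) := by ring

lemma choose_le_mid_real {m : ℕ} (hm : 1 ≤ m) (k : ℕ) :
    (m.choose k : ℝ) ≤ Real.sqrt 2 * 2 ^ m / Real.sqrt m := by
  have h1 : (m.choose k : ℝ) ≤ (m.choose (m / 2) : ℝ) := by
    exact_mod_cast Nat.choose_le_middle k m
  refine le_trans h1 ?_
  have hm0 : (0:ℝ) < Real.sqrt m := Real.sqrt_pos.2 (by exact_mod_cast hm)
  rcases Nat.even_or_odd m with ⟨q, hq⟩ | ⟨q, hq⟩
  · subst hq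
    have hq1 : 1 ≤ q := by omega
    have hmid : (q + q) / 2 = q := by omega
    rw [hmid]
    have h2 : ((q + q).choose q : ℝ) ≤ 4 ^ q / Real.sqrt (3 * (q:ℝ) + 1) := by
      have := central_binom_le q
      rwa [Nat.centralBinom, show 2 * q = q + q by ring] at this
    refine le_trans h2 ?_
    have hs0 : (0:ℝ) < Real.sqrt (3 * (q:ℝ) + 1) := Real.sqrt_pos.2 (by positivity)
    rw [div_le_div_iff₀ hs0 hm0]
    have e4 : (4:ℝ)^q = 2^(q+q) := by
      rw [show (4:ℝ) = 2^2 by norm_num, ← pow_mul]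
      congr 1
      ring
    calc (4:ℝ)^q * Real.sqrt (q+q : ℕ)
        ≤ 4^q * (Real.sqrt 2 * Real.sqrt (3 * (q:ℝ) + 1)) := by
          apply mul_le_mul_of_nonneg_left _ (by positivity)
          rw [← Real.sqrt_mul (by norm_num : (0:ℝ) ≤ 2)]
          apply Real.sqrt_le_sqrt
          push_cast
          linarith
      _ = Real.sqrt 2 * 2^(q+q) * Real.sqrt (3 * (q:ℝ) + 1) := by rw [e4]; ring
  · subst hq
    have hmid : (2 * q + 1) / 2 = q := by omega
    rw [hmid]
    have hnat : (2 * q + 1).choose q ≤ 2 * (2 * q).choose q := by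
      rcases Nat.eq_zero_or_pos q with rfl | hqpos
      · simp
      · have hx := Nat.choose_succ_succ (2 * q) (q - 1)
        rw [show (q - 1).succ = q by omega] at hx
        rw [show (2 * q).succ = 2 * q + 1 by omega] at hx
        have hle : (2 * q).choose (q - 1) ≤ (2 * q).choose q := by
          have := Nat.choose_le_middle (q - 1) (2 * q)
          rwa [show 2 * q / 2 = q by omega] at this
        omega
    have h2 : ((2 * q + 1).choose q : ℝ) ≤ 2 * (4 ^ q / Real.sqrt (3 * (q:ℝ) + 1)) := by
      calc ((2 * q + 1).choose q : ℝ) ≤ 2 * ((2 * q).choose q : ℝ) := by exact_mod_cast hnat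
        _ ≤ 2 * (4 ^ q / Real.sqrt (3 * (q:ℝ) + 1)) := by
            apply mul_le_mul_of_nonneg_left _ (by norm_num)
            have := central_binom_le q
            rwa [Nat.centralBinom] at this
    refine le_trans h2 ?_
    have hs0 : (0:ℝ) < Real.sqrt (3 * (q:ℝ) + 1) := Real.sqrt_pos.2 (by positivity)
    rw [mul_div_assoc', div_le_div_iff₀ hs0 hm0]
    have e4 : (2:ℝ) * 4^q = 2^(2*q+1) := by
      rw [show (4:ℝ) = 2^2 by norm_num, ← pow_mul]
      rw [show (2:ℝ) * 2^(2*q) = 2^(2*q+1) by rw [pow_succ]; ring]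
    calc (2:ℝ) * 4^q * Real.sqrt (2*q+1 : ℕ)
        ≤ 2 * 4^q * (Real.sqrt 2 * Real.sqrt (3 * (q:ℝ) + 1)) := by
          apply mul_le_mul_of_nonneg_left _ (by positivity)
          rw [← Real.sqrt_mul (by norm_num : (0:ℝ) ≤ 2)]
          apply Real.sqrt_le_sqrt
          push_cast
          linarith
      _ = Real.sqrt 2 * (2 * 4^q) * Real.sqrt (3 * (q:ℝ) + 1) := by ring
      _ = Real.sqrt 2 * 2^(2*q+1) * Real.sqrt (3 * (q:ℝ) + 1) := by rw [e4]

lemma choose_descent_step {m : ℕ} (hm : 1 ≤ m) (t : ℕ) :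
    (m.choose (m / 2 + t + 1) : ℝ) ≤ (m.choose (m / 2 + t) : ℝ) * Real.exp (-(t:ℝ) / m) := by
  by_cases hbig : m < m / 2 + t + 1
  · rw [Nat.choose_eq_zero_of_lt hbig]
    push_cast
    positivity
  · push_neg at hbig
    have hrecN := Nat.choose_succ_right_eq m (m / 2 + t)
    have hrec : (m.choose (m / 2 + t + 1) : ℝ) * (((m / 2 : ℕ) : ℝ) + (t:ℝ) + 1) =
        (m.choose (m / 2 + t) : ℝ) * ((m:ℝ) - ((m / 2 : ℕ) : ℝ) - (t:ℝ)) := by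
      have := congrArg (Nat.cast : ℕ → ℝ) hrecN
      push_cast [Nat.cast_sub (show m / 2 + t ≤ m by omega)] at this
      convert this using 1 <;> ring
    have hN1 : 2 * (m / 2) ≤ m := by omega
    have hN2 : m ≤ 2 * (m / 2) + 1 := by omega
    have hmid1 : 2 * ((m / 2 : ℕ) : ℝ) ≤ (m : ℝ) := by exact_mod_cast hN1
    have hmid2 : (m : ℝ) ≤ 2 * ((m / 2 : ℕ) : ℝ) + 1 := by exact_mod_cast hN2
    have hbigR : ((m / 2 : ℕ) : ℝ) + (t : ℝ) + 1 ≤ (m : ℝ) := by exact_mod_cast hbig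
    set A : ℝ := ((m:ℝ) + 1) / 2 with hA
    set T : ℝ := (t:ℝ) with hT
    have hT0 : 0 ≤ T := by positivity
    have hm0R : (0:ℝ) < m := by exact_mod_cast hm
    have hAT0 : 0 < A + T := by rw [hA]; positivity
    have hnum1 : 1 ≤ (m:ℝ) - ((m / 2 : ℕ) : ℝ) - T := by rw [hT]; linarith
    have hnumA : (m:ℝ) - ((m / 2 : ℕ) : ℝ) - T ≤ A - T := by rw [hA]; linarith
    have hdenA : A + T ≤ ((m / 2 : ℕ) : ℝ) + T + 1 := by rw [hA]; linarith
    have hATm : A + T ≤ 2 * m := by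
      rw [hA, hT]
      have : (t : ℝ) ≤ m := by
        have : (t : ℕ) ≤ m := by omega
        exact_mod_cast this
      linarith
    have e1 : Real.exp (-(2*T)/(A+T)) ≤ Real.exp (-T/m) := by
      apply Real.exp_le_exp.2
      rw [neg_div, neg_div, neg_le_neg_iff]
      rw [div_le_div_iff₀ hm0R hAT0]
      nlinarith
    have e2 : A - T ≤ Real.exp (-(2*T)/(A+T)) * (A+T) := by
      have hx := Real.add_one_le_exp (-(2*T)/(A+T))
      have := mul_le_mul_of_nonneg_right hx (le_of_lt hAT0)
      have hxe : (-(2*T)/(A+T) + 1) * (A+T) = A - T := by field_simp; ring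
      linarith [hxe ▸ this]
    have keynum : (m:ℝ) - ((m / 2 : ℕ) : ℝ) - T ≤
        Real.exp (-T/m) * (((m / 2 : ℕ) : ℝ) + T + 1) := by
      have e3 : Real.exp (-(2*T)/(A+T)) * (A+T) ≤ Real.exp (-T/m) * (A + T) :=
        mul_le_mul_of_nonneg_right e1 (le_of_lt hAT0)
      have e4 : Real.exp (-T/m) * (A + T) ≤ Real.exp (-T/m) * (((m / 2 : ℕ) : ℝ) + T + 1) :=
        mul_le_mul_of_nonneg_left hdenA (le_of_lt (Real.exp_pos _))
      linarith
    have hden0 : (0:ℝ) < ((m / 2 : ℕ) : ℝ) + T + 1 := by positivity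
    apply le_of_mul_le_mul_right _ hden0
    calc (m.choose (m / 2 + t + 1) : ℝ) * (((m / 2 : ℕ) : ℝ) + T + 1)
        = (m.choose (m / 2 + t) : ℝ) * ((m:ℝ) - ((m / 2 : ℕ) : ℝ) - T) := hrec
      _ ≤ (m.choose (m / 2 + t) : ℝ) * (Real.exp (-T/m) * (((m / 2 : ℕ) : ℝ) + T + 1)) := by
          apply mul_le_mul_of_nonneg_left keynum (by positivity)
      _ = (m.choose (m / 2 + t) : ℝ) * Real.exp (-(t:ℝ)/m) * (((m / 2 : ℕ) : ℝ) + T + 1) := by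
          rw [hT]; ring

lemma choose_descent {m : ℕ} (hm : 1 ≤ m) (t : ℕ) :
    (m.choose (m / 2 + t) : ℝ) ≤
      (m.choose (m / 2) : ℝ) * Real.exp (-((t:ℝ) * ((t:ℝ) - 1)) / (2 * m)) := by
  induction t with
  | zero => simp
  | succ t IH =>
    have step := choose_descent_step hm t
    have hm0 : (m:ℝ) ≠ 0 := by positivity
    calc (m.choose (m / 2 + (t + 1)) : ℝ)
        = (m.choose (m / 2 + t + 1) : ℝ) := by rw [← Nat.add_assoc]
      _ ≤ (m.choose (m / 2 + t) : ℝ) * Real.exp (-(t:ℝ)/m) := step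
      _ ≤ ((m.choose (m / 2) : ℝ) * Real.exp (-((t:ℝ) * ((t:ℝ) - 1)) / (2 * m))) *
            Real.exp (-(t:ℝ)/m) := by
          apply mul_le_mul_of_nonneg_right IH (le_of_lt (Real.exp_pos _))
      _ = (m.choose (m / 2) : ℝ) *
            Real.exp (-((((t:ℕ)+1 : ℕ):ℝ) * ((((t:ℕ)+1 : ℕ):ℝ) - 1)) / (2 * m)) := by
          rw [mul_assoc, ← Real.exp_add]
          congr 1
          push_cast
          field_simp
          ring

lemma choose_gauss {m : ℕ} (hm : 1 ≤ m) (k : ℕ) :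
    (m.choose k : ℝ) ≤ Real.sqrt 2 * 2 ^ m / Real.sqrt m *
      (Real.exp 1 * Real.exp (-((k:ℝ) - m / 2) ^ 2 / (4 * m))) := by
  have hm0R : (0:ℝ) < m := by exact_mod_cast hm
  have hN1 : 2 * (m / 2) ≤ m := by omega
  have hN2 : m ≤ 2 * (m / 2) + 1 := by omega
  have hmid1 : 2 * ((m / 2 : ℕ) : ℝ) ≤ (m : ℝ) := by exact_mod_cast hN1
  have hmid2 : (m : ℝ) ≤ 2 * ((m / 2 : ℕ) : ℝ) + 1 := by exact_mod_cast hN2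
  have main : (m.choose k : ℝ) ≤ (m.choose (m / 2) : ℝ) *
      (Real.exp 1 * Real.exp (-((k:ℝ) - m / 2) ^ 2 / (4 * m))) := by
    rcases le_or_gt (m / 2) k with hk | hk
    · obtain ⟨t, rfl⟩ : ∃ t, k = m / 2 + t := ⟨k - m / 2, by omega⟩
      refine le_trans (choose_descent hm t) ?_
      apply mul_le_mul_of_nonneg_left _ (by positivity)
      rw [← Real.exp_add]
      apply Real.exp_le_exp.2
      have hm1R : (1:ℝ) ≤ m := by exact_mod_cast hm
      set u : ℝ := ((m / 2 + t : ℕ) : ℝ) - (m:ℝ)/2 with hu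
      have hut : u ≤ (t:ℝ) := by rw [hu]; push_cast; linarith
      have hut2 : (t:ℝ) - 1/2 ≤ u := by rw [hu]; push_cast; linarith
      clear_value u
      have ht0 : (0:ℝ) ≤ t := by positivity
      have husq : u^2 ≤ (t:ℝ)^2 + 1/4 := by
        nlinarith [mul_nonneg ht0 (sub_nonneg.2 hut),
          mul_nonneg (sub_nonneg.2 hut) (show (0:ℝ) ≤ 1/2 - ((t:ℝ) - u) by linarith)]
      have expand : (1 + -u^2/(4*(m:ℝ))) - (-((t:ℝ)*((t:ℝ)-1))/(2*m))
          = (4*(m:ℝ) + 2*(t:ℝ)*((t:ℝ)-1) - u^2)/(4*m) := by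
        field_simp
        ring
      have hposnum : (0:ℝ) ≤ 4*(m:ℝ) + 2*(t:ℝ)*((t:ℝ)-1) - u^2 := by
        nlinarith [husq, sq_nonneg ((t:ℝ) - 1), hm1R]
      have hfr : (0:ℝ) ≤ (4*(m:ℝ) + 2*(t:ℝ)*((t:ℝ)-1) - u^2)/(4*m) :=
        div_nonneg hposnum (by positivity)
      rw [← expand] at hfr
      linarith
    · have hk' : k ≤ m := by omega
      have hsymm : (m.choose k : ℝ) = (m.choose (m - k) : ℝ) :=
        (congrArg (fun x : ℕ => (x:ℝ)) (Nat.choose_symm hk')).symm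
      rw [hsymm]
      obtain ⟨t, ht⟩ : ∃ t, m - k = m / 2 + t := ⟨m - k - m / 2, by omega⟩
      rw [ht]
      refine le_trans (choose_descent hm t) ?_
      apply mul_le_mul_of_nonneg_left _ (by positivity)
      rw [← Real.exp_add]
      apply Real.exp_le_exp.2
      have hm1R : (1:ℝ) ≤ m := by exact_mod_cast hm
      set u : ℝ := (k:ℝ) - (m:ℝ)/2 with hu
      have htR : (m:ℝ) - (k:ℝ) = ((m/2 : ℕ):ℝ) + (t:ℝ) := by
        have := congrArg (fun x : ℕ => (x:ℝ)) ht
        push_cast [Nat.cast_sub hk'] at this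
        linarith
      have hut : -u ≤ (t:ℝ) := by rw [hu]; linarith
      have hut2 : (t:ℝ) ≤ -u + 1/2 := by rw [hu]; linarith
      clear_value u
      have ht0 : (0:ℝ) ≤ t := by positivity
      have husq : u^2 ≤ (t:ℝ)^2 + 1/4 := by
        nlinarith [mul_nonneg ht0 (show (0:ℝ) ≤ (t:ℝ) + u by linarith),
          mul_nonneg (show (0:ℝ) ≤ (t:ℝ) + u by linarith)
            (show (0:ℝ) ≤ 1/2 - ((t:ℝ) + u) by linarith)]
      have expand : (1 + -u^2/(4*(m:ℝ))) - (-((t:ℝ)*((t:ℝ)-1))/(2*m))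
          = (4*(m:ℝ) + 2*(t:ℝ)*((t:ℝ)-1) - u^2)/(4*m) := by
        field_simp
        ring
      have hposnum : (0:ℝ) ≤ 4*(m:ℝ) + 2*(t:ℝ)*((t:ℝ)-1) - u^2 := by
        nlinarith [husq, sq_nonneg ((t:ℝ) - 1), hm1R]
      have hfr : (0:ℝ) ≤ (4*(m:ℝ) + 2*(t:ℝ)*((t:ℝ)-1) - u^2)/(4*m) :=
        div_nonneg hposnum (by positivity)
      rw [← expand] at hfr
      linarith
  refine le_trans main ?_
  apply mul_le_mul_of_nonneg_right (choose_le_mid_real hm (m / 2)) (by positivity)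

lemma quad_min {lr hr x y : ℝ} (hl : 0 < lr) (hh : 0 < hr) :
    (2*x + y)^2 / (16*lr + 4*hr) ≤ x^2/(4*lr) + y^2/(4*hr) := by
  rw [div_add_div _ _ (by positivity) (by positivity),
    div_le_div_iff₀ (by positivity) (by positivity)]
  nlinarith [sq_nonneg (4*hr*x - 8*lr*y), mul_pos hl hh, sq_nonneg x, sq_nonneg y,
    mul_pos (mul_pos hl hl) hh, mul_pos hl (mul_pos hh hh)]

lemma geom_le {r : ℝ} (h0 : 0 ≤ r) (h1 : r < 1) (K : ℕ) :
    ∑ j ∈ Finset.range K, r ^ j ≤ 1 / (1 - r) := by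
  have hne : r ≠ 1 := ne_of_lt h1
  have h2 : (0:ℝ) < 1 - r := by linarith
  rw [geom_sum_eq hne]
  have e : (r ^ K - 1) / (r - 1) = (1 - r ^ K) / (1 - r) := by
    rw [← neg_div_neg_eq]
    ring_nf
  rw [e]
  gcongr
  nlinarith [pow_nonneg h0 K]

lemma exp_bound_abs {M : ℝ} (hM : 4 ≤ M) (d : ℝ) :
    Real.exp (-d^2 / M) ≤ Real.exp 1 * Real.exp (-(2 / Real.sqrt M * |d|)) := by
  have hM0 : (0:ℝ) < M := by linarith
  have hs0 : 0 < Real.sqrt M := Real.sqrt_pos.2 hM0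
  have hs2 : Real.sqrt M ^ 2 = M := Real.sq_sqrt (le_of_lt hM0)
  have hsne : Real.sqrt M ≠ 0 := ne_of_gt hs0
  rw [← Real.exp_add]
  apply Real.exp_le_exp.2
  rw [div_le_iff₀ hM0]
  have e : (1 + -(2 / Real.sqrt M * |d|)) * M = M - 2 * Real.sqrt M * |d| := by
    field_simp
    linear_combination (2 * |d|) * hs2
  rw [e]
  nlinarith [sq_nonneg (Real.sqrt M - |d|), sq_abs d, hs2]

lemma gauss_sum (K : ℕ) (μ M : ℝ) (hM : 4 ≤ M) :
    ∑ c ∈ Finset.range K, Real.exp (-((c:ℝ) - μ)^2 / M) ≤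
      2 * Real.exp 2 * Real.sqrt M := by
  classical
  have hM0 : (0:ℝ) < M := by linarith
  have hs0 : 0 < Real.sqrt M := Real.sqrt_pos.2 hM0
  have hs2 : Real.sqrt M ^ 2 = M := Real.sq_sqrt (le_of_lt hM0)
  have hs2' : 2 ≤ Real.sqrt M := by nlinarith [Real.sqrt_nonneg M]
  set u : ℝ := 2 / Real.sqrt M with hu
  have hu0 : 0 < u := by positivity
  have hu1 : u ≤ 1 := by rw [hu, div_le_one hs0]; linarith
  set r : ℝ := Real.exp (-u) with hr
  have hr0 : 0 ≤ r := le_of_lt (Real.exp_pos _)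
  have hr1 : r < 1 := by
    rw [hr, ← Real.exp_zero]
    exact Real.exp_lt_exp.2 (by linarith)
  have h1r : (0:ℝ) < 1 - r := by linarith
  set m₀ : ℕ := ⌈μ⌉₊ with hm₀
  have hμm : μ ≤ (m₀ : ℝ) := Nat.le_ceil μ
  have hup : ∀ c ∈ (Finset.range K).filter (fun c => m₀ ≤ c),
      Real.exp (-((c:ℝ) - μ)^2 / M) ≤ Real.exp 1 * r ^ (c - m₀) := by
    intro c hc
    have hc' := (Finset.mem_filter.1 hc).2
    refine le_trans (exp_bound_abs hM _) ?_
    apply mul_le_mul_of_nonneg_left _ (le_of_lt (Real.exp_pos 1))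
    rw [hr, ← Real.exp_nat_mul]
    apply Real.exp_le_exp.2
    have h1 : ((c - m₀ : ℕ) : ℝ) ≤ |(c:ℝ) - μ| := by
      rw [Nat.cast_sub hc']
      refine le_trans ?_ (le_abs_self _)
      linarith
    have h2 : ((c - m₀ : ℕ) : ℝ) * u ≤ |(c:ℝ) - μ| * u :=
      mul_le_mul_of_nonneg_right h1 (le_of_lt hu0)
    rw [hu] at h2 ⊢
    linarith
  have hlow : ∀ c ∈ (Finset.range K).filter (fun c => ¬ m₀ ≤ c),
      Real.exp (-((c:ℝ) - μ)^2 / M) ≤ Real.exp 1 * r ^ (m₀ - 1 - c) := by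
    intro c hc
    have hc' := (Finset.mem_filter.1 hc).2
    push_neg at hc'
    have hc'' : c ≤ m₀ - 1 := by omega
    have hm₀1 : 1 ≤ m₀ := by omega
    have hμgt : ((m₀ - 1 : ℕ) : ℝ) < μ := (Nat.lt_ceil (n := m₀ - 1) (a := μ)).1 (by omega)
    refine le_trans (exp_bound_abs hM _) ?_
    apply mul_le_mul_of_nonneg_left _ (le_of_lt (Real.exp_pos 1))
    rw [hr, ← Real.exp_nat_mul]
    apply Real.exp_le_exp.2
    have h1 : ((m₀ - 1 - c : ℕ) : ℝ) ≤ |(c:ℝ) - μ| := by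
      have habs : μ - (c:ℝ) ≤ |(c:ℝ) - μ| := by
        rw [abs_sub_comm]
        exact le_abs_self _
      rw [Nat.cast_sub hc'']
      have he : ((m₀ - 1 : ℕ) : ℝ) = (m₀ : ℝ) - 1 := by
        rw [Nat.cast_sub (by omega : 1 ≤ m₀)]
        norm_num
      rw [he] at hμgt ⊢
      linarith
    have h2 : ((m₀ - 1 - c : ℕ) : ℝ) * u ≤ |(c:ℝ) - μ| * u :=
      mul_le_mul_of_nonneg_right h1 (le_of_lt hu0)
    rw [hu] at h2 ⊢
    linarith
  have hupsum : ∑ c ∈ (Finset.range K).filter (fun c => m₀ ≤ c),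
      Real.exp (-((c:ℝ) - μ)^2 / M) ≤ Real.exp 1 * (1/(1-r)) := by
    refine le_trans (Finset.sum_le_sum hup) ?_
    rw [← Finset.mul_sum]
    apply mul_le_mul_of_nonneg_left _ (le_of_lt (Real.exp_pos 1))
    have himg : ∑ c ∈ (Finset.range K).filter (fun c => m₀ ≤ c), r ^ (c - m₀)
        = ∑ j ∈ ((Finset.range K).filter (fun c => m₀ ≤ c)).image (fun c => c - m₀), r ^ j := by
      rw [Finset.sum_image]
      intro x hx y hy hxy
      have hx' := (Finset.mem_filter.1 hx).2
      have hy' := (Finset.mem_filter.1 hy).2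
      simp only at hxy
      omega
    rw [himg]
    refine le_trans (Finset.sum_le_sum_of_subset_of_nonneg ?_ ?_) (geom_le hr0 hr1 K)
    · intro j hj
      rw [Finset.mem_image] at hj
      obtain ⟨c, hc, rfl⟩ := hj
      have := Finset.mem_range.1 (Finset.mem_filter.1 hc).1
      exact Finset.mem_range.2 (by omega)
    · intro j _ _
      positivity
  have hlowsum : ∑ c ∈ (Finset.range K).filter (fun c => ¬ m₀ ≤ c),
      Real.exp (-((c:ℝ) - μ)^2 / M) ≤ Real.exp 1 * (1/(1-r)) := by
    refine le_trans (Finset.sum_le_sum hlow) ?_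
    rw [← Finset.mul_sum]
    apply mul_le_mul_of_nonneg_left _ (le_of_lt (Real.exp_pos 1))
    have himg : ∑ c ∈ (Finset.range K).filter (fun c => ¬ m₀ ≤ c), r ^ (m₀ - 1 - c)
        = ∑ j ∈ ((Finset.range K).filter (fun c => ¬ m₀ ≤ c)).image (fun c => m₀ - 1 - c),
            r ^ j := by
      rw [Finset.sum_image]
      intro x hx y hy hxy
      have hx' := (Finset.mem_filter.1 hx).2
      have hy' := (Finset.mem_filter.1 hy).2
      push_neg at hx' hy'
      simp only at hxy
      omega
    rw [himg]
    refine le_trans (Finset.sum_le_sum_of_subset_of_nonneg ?_ ?_) (geom_le hr0 hr1 m₀)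
    · intro j hj
      rw [Finset.mem_image] at hj
      obtain ⟨c, hc, rfl⟩ := hj
      have hc' := (Finset.mem_filter.1 hc).2
      push_neg at hc'
      exact Finset.mem_range.2 (by omega)
    · intro j _ _
      positivity
  have hfin : 1/(1-r) ≤ Real.exp 1 / u := by
    have hx := Real.add_one_le_exp u
    have h2 : (u + 1) * r ≤ 1 := by
      have h3 : (u + 1) * r ≤ Real.exp u * r :=
        mul_le_mul_of_nonneg_right (by linarith) hr0
      rwa [hr, ← Real.exp_add, show u + -u = 0 by ring, Real.exp_zero] at h3
    have h1ur : u * r ≤ 1 - r := by nlinarith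
    have h2' : Real.exp (-(1:ℝ)) ≤ r := by
      rw [hr]
      exact Real.exp_le_exp.2 (by linarith)
    have h3 : u * Real.exp (-(1:ℝ)) ≤ 1 - r :=
      le_trans (mul_le_mul_of_nonneg_left h2' (le_of_lt hu0)) h1ur
    rw [div_le_div_iff₀ h1r hu0]
    have he : Real.exp 1 * Real.exp (-(1:ℝ)) = 1 := by
      rw [← Real.exp_add]
      norm_num
    nlinarith [mul_le_mul_of_nonneg_left h3 (le_of_lt (Real.exp_pos 1))]
  have h2u : 1/u = Real.sqrt M / 2 := by
    rw [hu, one_div_div]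
  calc ∑ c ∈ Finset.range K, Real.exp (-((c:ℝ) - μ)^2 / M)
      = ∑ c ∈ (Finset.range K).filter (fun c => m₀ ≤ c), Real.exp (-((c:ℝ) - μ)^2 / M)
        + ∑ c ∈ (Finset.range K).filter (fun c => ¬ m₀ ≤ c), Real.exp (-((c:ℝ) - μ)^2 / M) :=
        (Finset.sum_filter_add_sum_filter_not _ _ _).symm
    _ ≤ Real.exp 1 * (1/(1-r)) + Real.exp 1 * (1/(1-r)) := add_le_add hupsum hlowsum
    _ ≤ Real.exp 1 * (Real.exp 1 / u) + Real.exp 1 * (Real.exp 1 / u) := by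
        have := mul_le_mul_of_nonneg_left hfin (le_of_lt (Real.exp_pos 1))
        exact add_le_add this this
    _ = 2 * (Real.exp 1 * Real.exp 1) * (1/u) := by ring
    _ = 2 * Real.exp 2 * (Real.sqrt M / 2) := by
        rw [← Real.exp_add, h2u]
        norm_num
    _ ≤ 2 * Real.exp 2 * Real.sqrt M := by
        have h4 : (0:ℝ) < Real.exp 2 := Real.exp_pos 2
        nlinarith

lemma nat_two_pow_ge (k : ℕ) (hk : 8 ≤ k) : 2 * k^2 ≤ 2^k := by
  induction k, hk using Nat.le_induction with
  | base => norm_num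
  | succ k hk IH =>
    have h1 : 2 * (k+1)^2 ≤ 2 * (2 * k^2) := by nlinarith
    calc 2 * (k+1)^2 ≤ 2 * (2 * k^2) := h1
      _ ≤ 2 * 2^k := by omega
      _ = 2^(k+1) := by rw [pow_succ]; ring

lemma main_large {n : ℕ} (hn : 16 ≤ n) (𝒜 : Finset (Finset (Fin n)))
    (hyp : ∀ A ∈ 𝒜, ∀ B ∈ 𝒜,
      ¬ ((B \ A).card = 2 * (A \ B).card ∧ (A \ B).Nonempty ∧
          ∀ a ∈ A \ B, ∀ b ∈ B \ A, a < b)) :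
    (𝒜.card : ℝ) ≤ 3000 * 2 ^ n / Real.sqrt n := by
  classical
  set l : ℕ := n / 2 with hldef
  set h : ℕ := n - l with hhdef
  have hl : l ≤ n := by omega
  have hlh : l + h = n := by omega
  have hl8 : 8 ≤ l := by omega
  have hh8 : 8 ≤ h := by omega
  have h2l : n - 1 ≤ 2 * l := by omega
  have h2h : n ≤ 2 * h := by omega
  have hA : ∀ A ∈ 𝒜, ∀ B ∈ 𝒜, Rel l A B → A = B := by
    intro A hAm B hBm hrel
    by_contra hne
    obtain ⟨hcard, hlow, hhigh⟩ := hrel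
    have hnonempty : (A \ B).Nonempty := by
      rw [Finset.nonempty_iff_ne_empty]
      intro hemp
      have h0 : (A \ B).card = 0 := by rw [hemp]; simp
      have h1 : (B \ A).card = 0 := by omega
      have hs1 : A ⊆ B := by
        rw [← Finset.sdiff_eq_empty_iff_subset, ← Finset.card_eq_zero]
        exact h0
      have hs2 : B ⊆ A := by
        rw [← Finset.sdiff_eq_empty_iff_subset, ← Finset.card_eq_zero]
        exact h1
      exact hne (Finset.Subset.antisymm hs1 hs2)
    refine hyp A hAm B hBm ⟨hcard, hnonempty, ?_⟩
    intro a ha b hb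
    have h1 := hlow a ha
    have h2 := hhigh b hb
    exact Fin.lt_def.2 (by omega)
  have hl0 : (0:ℝ) < l := by exact_mod_cast (by omega : 0 < l)
  have hh0 : (0:ℝ) < h := by exact_mod_cast (by omega : 0 < h)
  have hn0 : (0:ℝ) < n := by exact_mod_cast (by omega : 0 < n)
  set μ : ℝ := (l:ℝ) + (h:ℝ)/2 with hμ
  set M : ℝ := 16*(l:ℝ) + 4*(h:ℝ) with hMdef
  have hM4 : 4 ≤ M := by
    rw [hMdef]
    have : (8:ℝ) ≤ l := by exact_mod_cast hl8
    linarith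
  set K0 : ℝ := (Real.sqrt 2 * 2^l / Real.sqrt l) * (Real.sqrt 2 * 2^h / Real.sqrt h) *
    (Real.exp 1 * Real.exp 1) with hK0
  have hK00 : (0:ℝ) ≤ K0 := by rw [hK0]; positivity
  set Wb : ℕ → ℝ := fun c => K0 * Real.exp (-(((c:ℝ) - μ)^2) / M) with hWbdef
  have hWb0 : ∀ c, 0 ≤ Wb c := by
    intro c
    simp only [hWbdef]
    positivity
  have hW : ∀ c a b, a ≤ l → b ≤ h → 2*a + b = c → Wr n l a b ≤ Wb c := by
    intro c a b hal hbh hc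
    have g1 := choose_gauss (m := l) (by omega) a
    have g2 := choose_gauss (m := h) (by omega) b
    have hWr : Wr n l a b = (l.choose a : ℝ) * (h.choose b : ℝ) := by
      unfold Wr
      rw [← hhdef]
    rw [hWr]
    calc (l.choose a : ℝ) * (h.choose b : ℝ)
        ≤ (Real.sqrt 2 * 2^l / Real.sqrt l *
            (Real.exp 1 * Real.exp (-(((a:ℝ) - (l:ℝ)/2)^2)/(4*(l:ℝ))))) *
          (Real.sqrt 2 * 2^h / Real.sqrt h *
            (Real.exp 1 * Real.exp (-(((b:ℝ) - (h:ℝ)/2)^2)/(4*(h:ℝ))))) := by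
          apply mul_le_mul g1 g2 (by positivity) (by positivity)
      _ = K0 * (Real.exp (-(((a:ℝ) - (l:ℝ)/2)^2)/(4*(l:ℝ))) *
            Real.exp (-(((b:ℝ) - (h:ℝ)/2)^2)/(4*(h:ℝ)))) := by
          rw [hK0]; ring
      _ ≤ Wb c := by
          simp only [hWbdef]
          apply mul_le_mul_of_nonneg_left _ hK00
          rw [← Real.exp_add]
          apply Real.exp_le_exp.2
          have hq := quad_min (x := (a:ℝ) - (l:ℝ)/2) (y := (b:ℝ) - (h:ℝ)/2) hl0 hh0
          have hxy : 2*((a:ℝ) - (l:ℝ)/2) + ((b:ℝ) - (h:ℝ)/2) = (c:ℝ) - μ := by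
            rw [hμ, ← hc]
            push_cast
            ring
          rw [hxy] at hq
          rw [hMdef]
          have e1 : -(((a:ℝ) - (l:ℝ)/2)^2)/(4*(l:ℝ)) + -(((b:ℝ) - (h:ℝ)/2)^2)/(4*(h:ℝ))
              = -((((a:ℝ) - (l:ℝ)/2)^2)/(4*(l:ℝ)) + (((b:ℝ) - (h:ℝ)/2)^2)/(4*(h:ℝ))) := by
            ring
          have e2 : -(((c:ℝ) - μ)^2) / (16*(l:ℝ) + 4*(h:ℝ))
              = -((((c:ℝ) - μ)^2) / (16*(l:ℝ) + 4*(h:ℝ))) := by ring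
          rw [e1, e2]
          exact neg_le_neg hq
  have hcm := combi_main hl (by omega) 𝒜 hA Wb hWb0 hW
  have hsum : ∑ c ∈ Finset.range (2 * l + (n - l) + 1), Wb c
      ≤ K0 * (2 * Real.exp 2 * Real.sqrt M) := by
    simp only [hWbdef]
    rw [← Finset.mul_sum]
    apply mul_le_mul_of_nonneg_left _ hK00
    have := gauss_sum (2 * l + (n - l) + 1) μ M hM4
    convert this using 2
  -- numeric facts
  have hsqM : Real.sqrt M ≤ 4 * Real.sqrt n := by
    have hcast : (l:ℝ) + (h:ℝ) = (n:ℝ) := by exact_mod_cast hlh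
    have h16 : M ≤ 16 * (n:ℝ) := by rw [hMdef]; linarith
    calc Real.sqrt M ≤ Real.sqrt (16 * n) := Real.sqrt_le_sqrt h16
      _ = 4 * Real.sqrt n := by
          rw [show (16:ℝ) * n = 4^2 * n by norm_num, Real.sqrt_mul (by positivity),
            Real.sqrt_sq (by norm_num)]
  have hlhR : (n:ℝ)/3 ≤ Real.sqrt l * Real.sqrt h := by
    rw [← Real.sqrt_mul (le_of_lt hl0)]
    have hsq : ((n:ℝ)/3)^2 ≤ (l:ℝ) * h := by
      have c1 : (n:ℝ) - 1 ≤ 2*(l:ℝ) := by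
        have := h2l
        have hcast : ((n - 1 : ℕ):ℝ) ≤ ((2*l : ℕ):ℝ) := by exact_mod_cast this
        push_cast [Nat.cast_sub (by omega : 1 ≤ n)] at hcast
        linarith
      have c2 : (n:ℝ) ≤ 2*(h:ℝ) := by exact_mod_cast h2h
      have c3 : (16:ℝ) ≤ n := by exact_mod_cast hn
      nlinarith
    calc (n:ℝ)/3 = Real.sqrt (((n:ℝ)/3)^2) := (Real.sqrt_sq (by positivity)).symm
      _ ≤ Real.sqrt ((l:ℝ)*h) := Real.sqrt_le_sqrt hsq
  have hK0eq : K0 = 2 * 2^n * (Real.exp 1 * Real.exp 1) / (Real.sqrt l * Real.sqrt h) := by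
    rw [hK0]
    have h2 : Real.sqrt 2 * Real.sqrt 2 = 2 := Real.mul_self_sqrt (by norm_num)
    have hp : (2:ℝ)^l * 2^h = 2^n := by rw [← pow_add, hlh]
    rw [div_mul_div_comm]
    rw [show Real.sqrt 2 * 2^l * (Real.sqrt 2 * 2^h)
        = (Real.sqrt 2 * Real.sqrt 2) * ((2:ℝ)^l * 2^h) by ring, h2, hp]
    ring
  have hsln : (0:ℝ) < Real.sqrt l * Real.sqrt h := by positivity
  have hsn0 : (0:ℝ) < Real.sqrt n := Real.sqrt_pos.2 hn0
  have hnn : (n:ℝ) = Real.sqrt n * Real.sqrt n := (Real.mul_self_sqrt (le_of_lt hn0)).symm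
  have hexp2 : Real.exp 2 = Real.exp 1 * Real.exp 1 := by
    rw [← Real.exp_add]
    norm_num
  have hX : Real.exp 1 ≤ 2.7182818286 := le_of_lt Real.exp_one_lt_d9
  have hX0 : (0:ℝ) < Real.exp 1 := Real.exp_pos 1
  have hgood : K0 * (2 * Real.exp 2 * Real.sqrt M) ≤ 2640 * 2^n / Real.sqrt n := by
    rw [hK0eq, hexp2]
    have step1 : Real.sqrt M / (Real.sqrt l * Real.sqrt h) ≤ (4 * Real.sqrt n)/((n:ℝ)/3) := by
      apply div_le_div₀ (by positivity) hsqM (by positivity) hlhR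
    have step2 : (4 * Real.sqrt n)/((n:ℝ)/3) = 12 / Real.sqrt n := by
      field_simp
      linear_combination (-12 : ℝ) * hnn
    have hE2 : Real.exp 1 * Real.exp 1 ≤ 7.39 := by
      have hmm := mul_le_mul hX hX (le_of_lt hX0) (by norm_num : (0:ℝ) ≤ 2.7182818286)
      nlinarith [hmm]
    have hE4 : (Real.exp 1 * Real.exp 1) * (Real.exp 1 * Real.exp 1) ≤ 55 := by
      have h0 : (0:ℝ) ≤ Real.exp 1 * Real.exp 1 := by positivity
      have hmm := mul_le_mul hE2 hE2 h0 (by norm_num : (0:ℝ) ≤ 7.39)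
      nlinarith [hmm]
    calc 2 * 2^n * (Real.exp 1 * Real.exp 1) / (Real.sqrt l * Real.sqrt h) *
          (2 * (Real.exp 1 * Real.exp 1) * Real.sqrt M)
        = (4 * ((Real.exp 1 * Real.exp 1) * (Real.exp 1 * Real.exp 1))) * 2^n *
            (Real.sqrt M / (Real.sqrt l * Real.sqrt h)) := by ring
      _ ≤ (4 * 55) * 2^n * (12 / Real.sqrt n) := by
          apply mul_le_mul
          · apply mul_le_mul_of_nonneg_right _ (by positivity)
            linarith
          · rw [← step2]; exact step1
          · positivity
          · positivity
      _ = 2640 * 2^n / Real.sqrt n := by ring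
  have hjunk : (2:ℝ)^l * ((n:ℝ) - (l:ℝ) + 1) ≤ 2^n / Real.sqrt n := by
    have hcast : (l:ℝ) + (h:ℝ) = (n:ℝ) := by exact_mod_cast hlh
    have hhn : (n:ℝ) - (l:ℝ) + 1 = (h:ℝ) + 1 := by linarith
    rw [hhn]
    have hsn_le_h : Real.sqrt n ≤ (h:ℝ) := by
      have hnh2 : (n:ℝ) ≤ ((h:ℝ))^2 := by
        have c2 : (n:ℝ) ≤ 2*(h:ℝ) := by exact_mod_cast h2h
        have c4 : (2:ℝ) ≤ h := by
          have : (8:ℝ) ≤ h := by exact_mod_cast hh8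
          linarith
        nlinarith
      calc Real.sqrt n ≤ Real.sqrt ((h:ℝ)^2) := Real.sqrt_le_sqrt hnh2
        _ = (h:ℝ) := Real.sqrt_sq (le_of_lt hh0)
    have hkey : ((h:ℝ) + 1) * Real.sqrt n ≤ 2^h := by
      have hnat := nat_two_pow_ge h hh8
      have hnatR : 2*(h:ℝ)^2 ≤ 2^h := by exact_mod_cast hnat
      calc ((h:ℝ) + 1) * Real.sqrt n ≤ ((h:ℝ) + 1) * (h:ℝ) := by
            apply mul_le_mul_of_nonneg_left hsn_le_h (by positivity)
        _ ≤ 2*(h:ℝ)^2 := by nlinarith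
        _ ≤ 2^h := hnatR
    have hp : (2:ℝ)^n = 2^l * 2^h := by rw [← pow_add, hlh]
    rw [hp, le_div_iff₀ hsn0]
    calc (2:ℝ)^l * ((h:ℝ)+1) * Real.sqrt n = (2:ℝ)^l * (((h:ℝ)+1) * Real.sqrt n) := by ring
      _ ≤ (2:ℝ)^l * 2^h := by
          apply mul_le_mul_of_nonneg_left hkey (by positivity)
  calc (𝒜.card : ℝ)
      ≤ (∑ c ∈ Finset.range (2 * l + (n - l) + 1), Wb c) + (2:ℝ)^l * ((n:ℝ) - (l:ℝ) + 1) := hcm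
    _ ≤ K0 * (2 * Real.exp 2 * Real.sqrt M) + 2^n / Real.sqrt n := add_le_add hsum hjunk
    _ ≤ 2640 * 2^n / Real.sqrt n + 2^n / Real.sqrt n := by
        apply add_le_add_left hgood
    _ ≤ 3000 * 2^n / Real.sqrt n := by
        have hpos : (0:ℝ) ≤ 2^n / Real.sqrt n := by positivity
        have e : 2640 * (2:ℝ)^n / Real.sqrt n + 2^n / Real.sqrt n
            = 2641 * (2^n / Real.sqrt n) := by ring
        have e2 : (3000:ℝ) * 2^n / Real.sqrt n = 3000 * (2^n / Real.sqrt n) := by ring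
        rw [e, e2]
        nlinarith

end Tilted

theorem stmt_11 :
    ∃ C : ℝ, 0 < C ∧ ∀ n : ℕ, 1 ≤ n → ∀ 𝒜 : Finset (Finset (Fin n)),
      (∀ A ∈ 𝒜, ∀ B ∈ 𝒜,
        ¬ ((B \ A).card = 2 * (A \ B).card ∧ (A \ B).Nonempty ∧
            ∀ a ∈ A \ B, ∀ b ∈ B \ A, a < b)) →
      (𝒜.card : ℝ) ≤
        C * Real.exp (120 * Real.sqrt (Real.log n)) * 2 ^ n / Real.sqrt n := by
  refine ⟨3000, by norm_num, ?_⟩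
  intro n hn 𝒜 hyp
  have hsn0 : (0:ℝ) < Real.sqrt n := Real.sqrt_pos.2 (by exact_mod_cast hn)
  have hexp1 : (1:ℝ) ≤ Real.exp (120 * Real.sqrt (Real.log n)) := by
    rw [← Real.exp_zero]
    apply Real.exp_le_exp.2
    positivity
  have h2pow : (0:ℝ) < 2^n := pow_pos (by norm_num) n
  have hmono : 3000 * (2:ℝ)^n / Real.sqrt n ≤
      3000 * Real.exp (120 * Real.sqrt (Real.log n)) * 2^n / Real.sqrt n := by
    have h2 : (3000:ℝ) * 2^n ≤ 3000 * Real.exp (120 * Real.sqrt (Real.log n)) * 2^n := by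
      nlinarith [mul_nonneg (le_of_lt h2pow) (sub_nonneg.2 hexp1)]
    rw [div_le_div_iff₀ hsn0 hsn0]
    nlinarith [mul_le_mul_of_nonneg_right h2 (le_of_lt hsn0)]
  rcases le_or_gt 16 n with hbig | hsmall
  · exact le_trans (Tilted.main_large hbig 𝒜 hyp) hmono
  · have hcard : (𝒜.card : ℝ) ≤ 2^n := by
      have h1 : 𝒜.card ≤ Fintype.card (Finset (Fin n)) := by
        rw [← Finset.card_univ]
        exact Finset.card_le_univ 𝒜
      have h2 : Fintype.card (Finset (Fin n)) = 2^n := by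
        rw [Fintype.card_finset, Fintype.card_fin]
      rw [h2] at h1
      exact_mod_cast h1
    have hsmall2 : (2:ℝ)^n ≤ 3000 * 2^n / Real.sqrt n := by
      rw [le_div_iff₀ hsn0]
      have hsn4 : Real.sqrt n ≤ 4 := by
        have hle : (n:ℝ) ≤ 16 := by exact_mod_cast le_of_lt hsmall
        calc Real.sqrt n ≤ Real.sqrt 16 := Real.sqrt_le_sqrt hle
          _ = 4 := by rw [show (16:ℝ) = 4^2 by norm_num, Real.sqrt_sq (by norm_num)]
      nlinarith [h2pow]
    exact le_trans (le_trans hcard hsmall2) hmono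
end

section
/- Let n = 3m, identify subsets of {1,...,n} with {0,1}^n, and let f : {0,1}^n → {0,...,7}^m be given by f(x)_i = x_i + 2x_{i+m} + 4x_{i+2m}. If L = {L₀,...,L₇} is a combinatorial line in {0,...,7}^m (with L_r the point whose active coordinates equal r), and A, B ⊆ {1,...,n} satisfy f(A) = L₁ and f(B) = L₆, then |B \ A| = 2|A \ B|, A \ B is nonempty, every element of A \ B lies in {1,...,m}, and every element of B \ A lies in {m+1,...,3m}; in particular a < b for all a ∈ A \ B, b ∈ B \ A. -/
/-- A combinatorial line in `[8]^m` is encoded by `c : Fin m → Option (Fin 8)`, where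
`c i = none` means `i` is an active coordinate; the point `L r` of the line is
`fun i => (c i).getD r`. -/
theorem stmt_13 (m : ℕ) (A B : Finset (Fin (3 * m)))
    (c : Fin m → Option (Fin 8)) (hW : ∃ i, c i = none)
    (hA : ∀ i : Fin m,
      ((if (⟨(i : ℕ), by omega⟩ : Fin (3 * m)) ∈ A then 1 else 0) +
        2 * (if (⟨(i : ℕ) + m, by omega⟩ : Fin (3 * m)) ∈ A then 1 else 0) +
        4 * (if (⟨(i : ℕ) + 2 * m, by omega⟩ : Fin (3 * m)) ∈ A then 1 else 0))
      = (((c i).getD 1 : Fin 8) : ℕ))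
    (hB : ∀ i : Fin m,
      ((if (⟨(i : ℕ), by omega⟩ : Fin (3 * m)) ∈ B then 1 else 0) +
        2 * (if (⟨(i : ℕ) + m, by omega⟩ : Fin (3 * m)) ∈ B then 1 else 0) +
        4 * (if (⟨(i : ℕ) + 2 * m, by omega⟩ : Fin (3 * m)) ∈ B then 1 else 0))
      = (((c i).getD 6 : Fin 8) : ℕ)) :
    (B \ A).card = 2 * (A \ B).card ∧
    (A \ B).Nonempty ∧
    (∀ a ∈ A \ B, (a : ℕ) < m) ∧
    (∀ b ∈ B \ A, m ≤ (b : ℕ)) ∧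
    (∀ a ∈ A \ B, ∀ b ∈ B \ A, a < b) := by
  classical
  set g0 : Fin m → Fin (3 * m) := fun i => ⟨(i : ℕ), by omega⟩ with hg0
  set g1 : Fin m → Fin (3 * m) := fun i => ⟨(i : ℕ) + m, by omega⟩ with hg1
  set g2 : Fin m → Fin (3 * m) := fun i => ⟨(i : ℕ) + 2 * m, by omega⟩ with hg2
  have key : ∀ i : Fin m,
      (c i = none → (g0 i ∈ A ∧ g0 i ∉ B ∧ g1 i ∉ A ∧ g1 i ∈ B ∧ g2 i ∉ A ∧ g2 i ∈ B)) ∧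
      (c i ≠ none → ((g0 i ∈ A ↔ g0 i ∈ B) ∧ (g1 i ∈ A ↔ g1 i ∈ B) ∧ (g2 i ∈ A ↔ g2 i ∈ B))) := by
    intro i
    have hA' := hA i
    have hB' := hB i
    have e1 : ((1 : Fin 8) : ℕ) = 1 := rfl
    have e6 : ((6 : Fin 8) : ℕ) = 6 := rfl
    constructor
    · intro h
      rw [h] at hA' hB'
      simp only [Option.getD_none, e1, e6] at hA' hB'
      split_ifs at hA' hB' <;> first | omega | tauto
    · intro h
      obtain ⟨v, hv⟩ := Option.ne_none_iff_exists'.mp h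
      rw [hv] at hA' hB'
      simp only [Option.getD_some] at hA' hB'
      split_ifs at hA' hB' <;> first | omega | tauto
  set W : Finset (Fin m) := Finset.univ.filter (fun i => c i = none) with hWdef
  have memW : ∀ i : Fin m, i ∈ W ↔ c i = none := by
    intro i; simp [hWdef]
  have hAB : A \ B = W.image g0 := by
    ext x
    simp only [Finset.mem_sdiff, Finset.mem_image]
    constructor
    · rintro ⟨hxA, hxB⟩
      have hx3 : (x : ℕ) < 3 * m := x.isLt
      rcases lt_or_ge (x : ℕ) m with h1 | h1
      · set i : Fin m := ⟨(x : ℕ), h1⟩ with hi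
        have hx : g0 i = x := by apply Fin.ext; rfl
        refine ⟨i, ?_, hx⟩
        rw [memW]
        by_contra hc
        have := ((key i).2 hc).1
        rw [hx] at this
        exact hxB (this.mp hxA)
      · rcases lt_or_ge (x : ℕ) (2 * m) with h2 | h2
        · set i : Fin m := ⟨(x : ℕ) - m, by omega⟩ with hi
          have hx : g1 i = x := by apply Fin.ext; simp [hg1, hi]; omega
          exfalso
          by_cases hc : c i = none
          · have := ((key i).1 hc).2.2.1; rw [hx] at this; exact this hxA
          · have := ((key i).2 hc).2.1; rw [hx] at this; exact hxB (this.mp hxA)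
        · set i : Fin m := ⟨(x : ℕ) - 2 * m, by omega⟩ with hi
          have hx : g2 i = x := by apply Fin.ext; simp [hg2, hi]; omega
          exfalso
          by_cases hc : c i = none
          · have := ((key i).1 hc).2.2.2.2.2; rw [hx] at this; exact hxB this
          · have := ((key i).2 hc).2.2; rw [hx] at this; exact hxB (this.mp hxA)
    · rintro ⟨i, hiW, rfl⟩
      have h := (key i).1 ((memW i).mp hiW)
      exact ⟨h.1, h.2.1⟩
  have hBA : B \ A = W.image g1 ∪ W.image g2 := by
    ext x
    simp only [Finset.mem_sdiff, Finset.mem_union, Finset.mem_image]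
    constructor
    · rintro ⟨hxB, hxA⟩
      have hx3 : (x : ℕ) < 3 * m := x.isLt
      rcases lt_or_ge (x : ℕ) m with h1 | h1
      · set i : Fin m := ⟨(x : ℕ), h1⟩ with hi
        have hx : g0 i = x := by apply Fin.ext; rfl
        exfalso
        by_cases hc : c i = none
        · have := ((key i).1 hc).2.1; rw [hx] at this; exact this hxB
        · have := ((key i).2 hc).1; rw [hx] at this; exact hxA (this.mpr hxB)
      · rcases lt_or_ge (x : ℕ) (2 * m) with h2 | h2
        · set i : Fin m := ⟨(x : ℕ) - m, by omega⟩ with hi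
          have hx : g1 i = x := by apply Fin.ext; simp [hg1, hi]; omega
          left
          refine ⟨i, ?_, hx⟩
          rw [memW]
          by_contra hc
          have := ((key i).2 hc).2.1
          rw [hx] at this
          exact hxA (this.mpr hxB)
        · set i : Fin m := ⟨(x : ℕ) - 2 * m, by omega⟩ with hi
          have hx : g2 i = x := by apply Fin.ext; simp [hg2, hi]; omega
          right
          refine ⟨i, ?_, hx⟩
          rw [memW]
          by_contra hc
          have := ((key i).2 hc).2.2
          rw [hx] at this
          exact hxA (this.mpr hxB)
    · rintro (⟨i, hiW, rfl⟩ | ⟨i, hiW, rfl⟩)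
      · have h := (key i).1 ((memW i).mp hiW)
        exact ⟨h.2.2.2.1, h.2.2.1⟩
      · have h := (key i).1 ((memW i).mp hiW)
        exact ⟨h.2.2.2.2.2, h.2.2.2.2.1⟩
  have inj0 : Set.InjOn g0 W := fun a _ b _ h => by
    apply Fin.ext; have := congrArg Fin.val h; simp [hg0] at this; omega
  have inj1 : Set.InjOn g1 W := fun a _ b _ h => by
    apply Fin.ext; have := congrArg Fin.val h; simp [hg1] at this; omega
  have inj2 : Set.InjOn g2 W := fun a _ b _ h => by
    apply Fin.ext; have := congrArg Fin.val h; simp [hg2] at this; omega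
  have hdisj : Disjoint (W.image g1) (W.image g2) := by
    rw [Finset.disjoint_left]
    rintro x hx1 hx2
    simp only [Finset.mem_image] at hx1 hx2
    obtain ⟨a, _, ha⟩ := hx1
    obtain ⟨b, _, hb⟩ := hx2
    have h1 := congrArg Fin.val ha
    have h2 := congrArg Fin.val hb
    simp [hg1, hg2] at h1 h2
    omega
  have cAB : (A \ B).card = W.card := by
    rw [hAB, Finset.card_image_of_injOn inj0]
  have cBA : (B \ A).card = 2 * W.card := by
    rw [hBA, Finset.card_union_of_disjoint hdisj,
      Finset.card_image_of_injOn inj1, Finset.card_image_of_injOn inj2]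
    ring
  refine ⟨by rw [cAB, cBA], ?_, ?_, ?_, ?_⟩
  · obtain ⟨i, hi⟩ := hW
    exact ⟨g0 i, by rw [hAB]; exact Finset.mem_image_of_mem _ ((memW i).mpr hi)⟩
  · intro a ha
    rw [hAB] at ha
    obtain ⟨i, _, rfl⟩ := Finset.mem_image.mp ha
    exact i.isLt
  · intro b hb
    rw [hBA] at hb
    rcases Finset.mem_union.mp hb with h | h <;>
      obtain ⟨i, _, rfl⟩ := Finset.mem_image.mp h <;> simp [hg1, hg2] <;> omega
  · intro a ha b hb
    rw [hAB] at ha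
    rw [hBA] at hb
    obtain ⟨i, _, rfl⟩ := Finset.mem_image.mp ha
    have hbm : m ≤ (b : ℕ) := by
      rcases Finset.mem_union.mp hb with h | h <;>
        obtain ⟨j, _, rfl⟩ := Finset.mem_image.mp h <;> simp [hg1, hg2] <;> omega
    exact Fin.lt_def.mpr (by have := i.isLt; simp [hg0]; omega)
end

section
/- Let t be even, γ ≥ 4/t, and 𝒟 a family of (t/2)-subsets of a t-set T with |𝒟| = γ·C(t, t/2). Then the number of unordered neighbour pairs in 𝒟 (pairs B, B' ∈ 𝒟 with |B △ B'| = 2) is at least (γ·t²/32)·|𝒟|. -/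
private lemma stmt_18_aux (γ t k c n Dc Sg P Sc : ℝ)
    (hγ0 : 0 < γ) (hn : 0 < n) (hc : 0 < c) (hNle : n ≤ c)
    (htk : t = 2 * k) (hk0 : 0 ≤ k)
    (hDc : Dc = γ * c) (hSgv : Sg = k * Dc)
    (hCS : Sg ^ 2 ≤ n * P) (hSg2n : 2 * n ≤ Sg)
    (hSge : (P - Sg) / 2 ≤ Sc) :
    γ * t ^ 2 / 32 * Dc ≤ Sc := by
  have hSgpos : 0 < Sg := lt_of_lt_of_le (by positivity) hSg2n
  have hPge : Sg ^ 2 / n ≤ P := (div_le_iff₀ hn).mpr (by linarith)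
  have hstep : Sg ≤ Sg ^ 2 / (2 * n) := by
    rw [le_div_iff₀ (by positivity)]
    nlinarith
  have h3 : Sg ^ 2 / (4 * n) ≤ (P - Sg) / 2 := by
    have e1 : Sg ^ 2 / (2 * n) = Sg ^ 2 / n / 2 := by rw [div_div, mul_comm]
    have e2 : Sg ^ 2 / n - Sg ^ 2 / (2 * n) = Sg ^ 2 / (2 * n) := by rw [e1]; ring
    have h4 : Sg ^ 2 / (2 * n) ≤ P - Sg := by linarith
    have h5 : Sg ^ 2 / (4 * n) = Sg ^ 2 / (2 * n) / 2 := by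
      rw [div_div, show (2 * n) * 2 = 4 * n by ring]
    linarith
  have h6 : γ * t ^ 2 / 32 * Dc ≤ Sg ^ 2 / (4 * n) := by
    rw [le_div_iff₀ (by positivity), hDc, htk, hSgv, hDc]
    nlinarith [mul_le_mul_of_nonneg_left hNle
      (show (0:ℝ) ≤ γ ^ 2 * c * k ^ 2 / 2 by positivity), sq_nonneg (γ * c * k)]
  linarith

theorem stmt_18 {α : Type*} [DecidableEq α] (T : Finset α) (t : ℕ) (ht : T.card = t)
    (hteven : Even t) (γ : ℝ) (hγ : 4 / (t : ℝ) ≤ γ)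
    (𝒟 : Finset (Finset α)) (h𝒟 : 𝒟 ⊆ T.powersetCard (t / 2))
    (hcard : (𝒟.card : ℝ) = γ * (Nat.choose t (t / 2) : ℝ)) :
    γ * (t : ℝ) ^ 2 / 32 * (𝒟.card : ℝ) ≤
      (((𝒟.powersetCard 2).filter
          (fun P => ∃ B ∈ P, ∃ B' ∈ P, B ≠ B' ∧ (symmDiff B B').card = 2)).card : ℝ) := by
  classical
  obtain rfl | hpos := Nat.eq_zero_or_pos t
  · have h0 : γ * ((0:ℕ) : ℝ) ^ 2 / 32 * (𝒟.card : ℝ) = 0 := by push_cast; ring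
    rw [h0]
    positivity
  set k := t / 2 with hk
  have hk2 : k * 2 = t := Nat.div_two_mul_two_of_even hteven
  have ht2 : 2 ≤ t := by
    rcases hteven with ⟨m, hm⟩; omega
  have hk1 : 1 ≤ k := by omega
  have htR : (0:ℝ) < t := by exact_mod_cast hpos
  have hγ0 : 0 < γ := lt_of_lt_of_le (by positivity) hγ
  have hD : ∀ D ∈ 𝒟, D ⊆ T ∧ D.card = k := fun D hDm => Finset.mem_powersetCard.mp (h𝒟 hDm)
  set 𝒜 := T.powersetCard (k+1) with h𝒜
  set Y : Finset α → Finset (Finset α) := fun A => 𝒟.filter (· ⊆ A) with hY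
  set S := (𝒟.powersetCard 2).filter
      (fun P => ∃ B ∈ P, ∃ B' ∈ P, B ≠ B' ∧ (symmDiff B B').card = 2) with hS
  -- key geometric lemma
  have key : ∀ A ∈ 𝒜, ∀ D ∈ 𝒟, ∀ D' ∈ 𝒟, D ≠ D' → D ⊆ A → D' ⊆ A →
      D ∪ D' = A ∧ (symmDiff D D').card = 2 := by
    intro A hA D hDm D' hD'm hne hDA hD'A
    obtain ⟨hDT, hDc⟩ := hD D hDm
    obtain ⟨hD'T, hD'c⟩ := hD D' hD'm
    have hAc : A.card = k + 1 := (Finset.mem_powersetCard.mp hA).2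
    have hinter : (D ∩ D').card < k := by
      rcases lt_or_ge (D ∩ D').card k with h | h
      · exact h
      · exfalso
        have h1 : D ∩ D' = D :=
          Finset.eq_of_subset_of_card_le Finset.inter_subset_left (by omega)
        have h2 : D ⊆ D' := by rw [← h1]; exact Finset.inter_subset_right
        exact hne (Finset.eq_of_subset_of_card_le h2 (by omega))
    have hcui : (D ∪ D').card + (D ∩ D').card = k + k := by
      rw [Finset.card_union_add_card_inter, hDc, hD'c]
    have hsub : D ∪ D' ⊆ A := Finset.union_subset hDA hD'A
    have hle : (D ∪ D').card ≤ k + 1 := hAc ▸ Finset.card_le_card hsub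
    have hunion : D ∪ D' = A := Finset.eq_of_subset_of_card_le hsub (by omega)
    refine ⟨hunion, ?_⟩
    have hsd : symmDiff D D' = (D ∪ D') \ (D ∩ D') := symmDiff_eq_sup_sdiff_inf D D'
    have hcu : (D ∪ D').card = k + 1 := by rw [hunion, hAc]
    rw [hsd, Finset.card_sdiff_of_subset Finset.inter_subset_union]
    omega
  -- biUnion disjointness
  have hdisj : ∀ A ∈ 𝒜, ∀ A' ∈ 𝒜, A ≠ A' →
      Disjoint ((Y A).powersetCard 2) ((Y A').powersetCard 2) := by
    intro A hA A' hA' hne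
    rw [Finset.disjoint_left]
    intro P hP hP'
    rw [Finset.mem_powersetCard] at hP hP'
    obtain ⟨hPY, hP2⟩ := hP
    obtain ⟨hPY', _⟩ := hP'
    obtain ⟨B, B', hBB, rfl⟩ := Finset.card_eq_two.mp hP2
    have hBm : B ∈ Y A := hPY (Finset.mem_insert_self _ _)
    have hB'm : B' ∈ Y A := hPY (by simp)
    have hBm' : B ∈ Y A' := hPY' (Finset.mem_insert_self _ _)
    have hB'm' : B' ∈ Y A' := hPY' (by simp)
    simp only [hY, Finset.mem_filter] at hBm hB'm hBm' hB'm'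
    have e1 := (key A hA B hBm.1 B' hB'm.1 hBB hBm.2 hB'm.2).1
    have e2 := (key A' hA' B hBm.1 B' hB'm.1 hBB hBm'.2 hB'm'.2).1
    exact hne (e1 ▸ e2)
  -- biUnion is inside S
  have hsubS : 𝒜.biUnion (fun A => (Y A).powersetCard 2) ⊆ S := by
    intro P hP
    rw [Finset.mem_biUnion] at hP
    obtain ⟨A, hA, hP⟩ := hP
    rw [Finset.mem_powersetCard] at hP
    obtain ⟨hPY, hP2⟩ := hP
    rw [hS, Finset.mem_filter, Finset.mem_powersetCard]
    obtain ⟨B, B', hBB, rfl⟩ := Finset.card_eq_two.mp hP2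
    have hBm : B ∈ Y A := hPY (Finset.mem_insert_self _ _)
    have hB'm : B' ∈ Y A := hPY (by simp)
    simp only [hY, Finset.mem_filter] at hBm hB'm
    refine ⟨⟨Finset.insert_subset hBm.1 (Finset.singleton_subset_iff.mpr hB'm.1), hP2⟩,
      B, Finset.mem_insert_self _ _, B', by simp, hBB,
      (key A hA B hBm.1 B' hB'm.1 hBB hBm.2 hB'm.2).2⟩
  -- counting: ∑ choose (y A) 2 ≤ S.card
  have hcount : ∑ A ∈ 𝒜, ((Y A).card).choose 2 ≤ S.card := by
    calc ∑ A ∈ 𝒜, ((Y A).card).choose 2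
        = ∑ A ∈ 𝒜, ((Y A).powersetCard 2).card := by
          simp [Finset.card_powersetCard]
      _ = (𝒜.biUnion fun A => (Y A).powersetCard 2).card :=
          (Finset.card_biUnion hdisj).symm
      _ ≤ S.card := Finset.card_le_card hsubS
  -- double counting: ∑ y A = k * |𝒟|
  have hdouble : ∑ A ∈ 𝒜, (Y A).card = k * 𝒟.card := by
    have hfib : ∀ D ∈ 𝒟, (𝒜.filter fun A => D ⊆ A).card = k := by
      intro D hDm
      obtain ⟨hDT, hDc⟩ := hD D hDm
      have himg : 𝒜.filter (fun A => D ⊆ A) = (T \ D).image (fun x => insert x D) := by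
        ext A
        simp only [Finset.mem_filter, Finset.mem_image, Finset.mem_sdiff, h𝒜,
          Finset.mem_powersetCard]
        constructor
        · rintro ⟨⟨hAT, hAc⟩, hDA⟩
          have hne : (A \ D).Nonempty := by
            rw [← Finset.card_pos, Finset.card_sdiff_of_subset hDA]; omega
          obtain ⟨x, hx⟩ := hne
          obtain ⟨hxA, hxD⟩ := Finset.mem_sdiff.mp hx
          refine ⟨x, ⟨hAT hxA, hxD⟩, ?_⟩
          refine (Finset.eq_of_subset_of_card_le (Finset.insert_subset hxA hDA) ?_)
          rw [Finset.card_insert_of_notMem hxD]; omega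
        · rintro ⟨x, ⟨hxT, hxD⟩, rfl⟩
          refine ⟨⟨Finset.insert_subset hxT hDT, ?_⟩, Finset.subset_insert _ _⟩
          rw [Finset.card_insert_of_notMem hxD, hDc]
      rw [himg, Finset.card_image_of_injOn, Finset.card_sdiff_of_subset hDT, ht, hDc]
      · omega
      · intro x hx y _ hxy
        have hxD := (Finset.mem_sdiff.mp hx).2
        have hxy' : insert x D = insert y D := hxy
        have hmem : x ∈ insert y D := hxy' ▸ Finset.mem_insert_self x D
        rcases Finset.mem_insert.mp hmem with h | h
        · exact h
        · exact absurd h hxD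
    calc ∑ A ∈ 𝒜, (Y A).card
        = ∑ A ∈ 𝒜, ∑ D ∈ 𝒟, if D ⊆ A then 1 else 0 :=
          Finset.sum_congr rfl fun A _ => Finset.card_filter _ _
      _ = ∑ D ∈ 𝒟, ∑ A ∈ 𝒜, if D ⊆ A then 1 else 0 := Finset.sum_comm
      _ = ∑ D ∈ 𝒟, (𝒜.filter fun A => D ⊆ A).card :=
          Finset.sum_congr rfl fun D _ => (Finset.card_filter _ _).symm
      _ = ∑ D ∈ 𝒟, k := Finset.sum_congr rfl hfib
      _ = k * 𝒟.card := by rw [Finset.sum_const, smul_eq_mul, mul_comm]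
  -- real arithmetic
  have hNcard : 𝒜.card = t.choose (k+1) := by rw [h𝒜, Finset.card_powersetCard, ht]
  have hNpos : (0:ℝ) < 𝒜.card := by
    have : 0 < 𝒜.card := by rw [hNcard]; exact Nat.choose_pos (by omega)
    exact_mod_cast this
  have hNle : (𝒜.card : ℝ) ≤ (t.choose k : ℝ) := by
    rw [hNcard]
    exact_mod_cast Nat.choose_le_middle (k+1) t
  set c : ℝ := (t.choose k : ℝ) with hc
  set n : ℝ := (𝒜.card : ℝ) with hn
  set Sg : ℝ := (k : ℝ) * 𝒟.card with hSg
  set P : ℝ := ∑ A ∈ 𝒜, ((Y A).card : ℝ)^2 with hP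
  have hsum2 : ∑ A ∈ 𝒜, ((Y A).card : ℝ) = Sg := by
    rw [hSg, ← Nat.cast_sum]
    exact_mod_cast congrArg (Nat.cast : ℕ → ℝ) hdouble
  have hCS : Sg ^ 2 ≤ n * P := by
    rw [← hsum2]
    exact sq_sum_le_card_mul_sum_sq
  have hSge : (P - Sg) / 2 ≤ (S.card : ℝ) := by
    have h1 : (∑ A ∈ 𝒜, (((Y A).card).choose 2 : ℝ)) ≤ (S.card : ℝ) := by
      exact_mod_cast hcount
    calc (P - Sg) / 2
        = ∑ A ∈ 𝒜, (((Y A).card : ℝ) * (((Y A).card : ℝ) - 1) / 2) := by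
          rw [hP, ← hsum2, ← Finset.sum_sub_distrib, ← Finset.sum_div]
          congr 1
          exact Finset.sum_congr rfl fun A _ => by ring
      _ = ∑ A ∈ 𝒜, (((Y A).card).choose 2 : ℝ) := by
          exact Finset.sum_congr rfl fun A _ => (Nat.cast_choose_two (K := ℝ) ((Y A).card)).symm
      _ ≤ (S.card : ℝ) := h1
  -- basic size facts
  have htk : (t : ℝ) = 2 * (k : ℝ) := by exact_mod_cast (by omega : t = 2 * k)
  have hγk : 2 ≤ γ * k := by
    have h4 : 4 ≤ γ * t := by
      rw [div_le_iff₀ htR] at hγ; linarith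
    rw [htk] at h4; linarith
  have hcpos : (0:ℝ) < c := by
    rw [hc]; exact_mod_cast Nat.choose_pos (by omega : k ≤ t)
  have hSgval : Sg = (k : ℝ) * (γ * c) := by rw [hSg, hcard, hc]
  have hSg2n : 2 * n ≤ Sg := by
    have : 2 * c ≤ Sg := by
      rw [hSgval]
      nlinarith [hcpos, hγk]
    linarith [mul_le_mul_of_nonneg_left hNle (by norm_num : (0:ℝ) ≤ 2)]
  clear_value Sg P n c
  have hSgpos : (0:ℝ) < Sg := by linarith
  exact stmt_18_aux γ (t:ℝ) (k:ℝ) c n (𝒟.card:ℝ) Sg P (S.card:ℝ)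
    hγ0 hNpos hcpos hNle htk (by positivity) hcard hSg hCS hSg2n hSge
end
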